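/- arXiv:2305.08125 — 4 statements merged into one kernel-verified Lean document; each statement's English description precedes it below -/
import Mathlib

section
/- Let u_1, …, u_n be positive integers and t, k positive integers such that u_i < t for every i, k < n, and every subset S ⊆ {1,…,n} with |S| < k satisfies Σ_{i∈S} u_i < t. Let E be the PB instance with projects C = {p, c_1,…,c_n, d_1,…,d_{k+1}}, costs cost(p) = t, cost(c_i) = u_i, cost(d_j) = t + 1, a single voter v who approves exactly the projects in C ∖ {p}, budget B = u_1 + … + u_n, and GreedyCost run with a tie-breaking order ≻ whose most-preferred element is p. If F is a set of at most k approval flips with p ∈ GreedyCost(E_F), then |F| = k and every flip in F removes the voter's approval of a project among c_1,…,c_n; that is, F = {(v, c_i) : i ∈ S} for some S ⊆ {1,…,n} with |S| = k (in particular, p is not approved in E_F). -/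
structure PB (C V : Type) [Fintype C] [DecidableEq C] [Fintype V] [DecidableEq V] where
  A : V → Finset C
  budget : ℕ
  cost : C → ℕ

namespace PB

variable {C V : Type} [Fintype C] [DecidableEq C] [Fintype V] [DecidableEq V]

/-- The approval score of a project: the number of voters approving it. -/
def score (E : PB C V) (c : C) : ℕ :=
  (Finset.univ.filter fun v => c ∈ E.A v).card

/-- Perform the approval flips in `F`: voter `v`'s approval set becomes
`A v ∆ {c : (v, c) ∈ F}`. -/
def flip (E : PB C V) (F : Finset (V × C)) : PB C V :=
  { E with A := fun v => symmDiff (E.A v) ((F.filter fun q => q.1 = v).image Prod.snd) }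

/-- Greedily process the given list of projects: starting from `W = ∅`,
add the currently considered project whenever it fits in the budget. -/
def greedyFold (budget : ℕ) (cost : C → ℕ) (order : List C) : Finset C :=
  order.foldl (fun W c => if (∑ x ∈ W, cost x) + cost c ≤ budget then insert c W else W) ∅

/-- The order in which GreedyAV considers the projects: non-increasing approval
score, ties broken in favor of `prec`-earlier projects. -/
noncomputable def consOrderAV (E : PB C V) (prec : C → C → Bool) : List C :=
  (Finset.univ : Finset C).toList.mergeSort fun c c' =>
    decide (E.score c' < E.score c) ||
      (decide (E.score c = E.score c') && (prec c c' || decide (c = c')))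

/-- GreedyAV with tie-breaking given by the strict relation `prec`. -/
noncomputable def greedyAV (E : PB C V) (prec : C → C → Bool) : Finset C :=
  greedyFold E.budget E.cost (consOrderAV E prec)

/-- The order in which GreedyCost considers the projects: non-increasing
approval-score-to-cost ratio (compared by cross-multiplication), ties broken in
favor of `prec`-earlier projects. -/
noncomputable def consOrderCost (E : PB C V) (prec : C → C → Bool) : List C :=
  (Finset.univ : Finset C).toList.mergeSort fun c c' =>
    decide (E.score c' * E.cost c < E.score c * E.cost c') ||
      (decide (E.score c * E.cost c' = E.score c' * E.cost c) && (prec c c' || decide (c = c')))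

/-- GreedyCost with tie-breaking given by the strict relation `prec`. -/
noncomputable def greedyCost (E : PB C V) (prec : C → C → Bool) : Finset C :=
  greedyFold E.budget E.cost (consOrderCost E prec)

/-- Cheaper-first tie-breaking: ties in approval score are broken in favor of
the cheaper project, with remaining ties broken by the residual order `prec0`. -/
def cheaperFirst (cost : C → ℕ) (prec0 : C → C → Bool) : C → C → Bool :=
  fun c c' => decide (cost c < cost c') || (decide (cost c = cost c') && prec0 c c')

end PB

/-! The reduction from Sized Subset Sum to GreedyCost-Flip-Bribery
(Theorem `greedycost-pb-npc`). -/

/-- The projects: `p`, `c_1, …, c_n`, and the dummy projects `d_1, …, d_{k+1}`. -/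
abbrev Proj8 (n k : ℕ) := Unit ⊕ (Fin n ⊕ Fin (k + 1))

/-- The preferred project `p`. -/
def pProj8 (n k : ℕ) : Proj8 n k := Sum.inl ()

/-- Costs: `cost(p) = t`, `cost(c_i) = u_i`, `cost(d_j) = t + 1`. -/
def cost8 {n : ℕ} (u : Fin n → ℕ) (t k : ℕ) : Proj8 n k → ℕ
  | .inl _ => t
  | .inr (.inl i) => u i
  | .inr (.inr _) => t + 1

/-- The PB instance: a single voter approving everything except `p`, and
budget `B = u_1 + … + u_n`. -/
def E8 {n : ℕ} (u : Fin n → ℕ) (t k : ℕ) : PB (Proj8 n k) Unit where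
  A := fun _ => Finset.univ.erase (Sum.inl ())
  budget := ∑ j, u j
  cost := cost8 u t k

namespace PBhelp

variable {C : Type} [DecidableEq C]

/-- The greedy step function. -/
def st (B : ℕ) (cost : C → ℕ) (W : Finset C) (c : C) : Finset C :=
  if (∑ x ∈ W, cost x) + cost c ≤ B then insert c W else W

lemma st_subset_insert (B : ℕ) (cost : C → ℕ) (W : Finset C) (c : C) :
    st B cost W c ⊆ insert c W := by
  unfold st; split
  · exact Finset.Subset.refl _
  · exact Finset.subset_insert _ _

lemma subset_st (B : ℕ) (cost : C → ℕ) (W : Finset C) (c : C) : W ⊆ st B cost W c := by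
  unfold st; split
  · exact Finset.subset_insert _ _
  · exact Finset.Subset.refl _

lemma foldl_mono (B : ℕ) (cost : C → ℕ) : ∀ (L : List C) (W : Finset C),
    W ⊆ L.foldl (st B cost) W := by
  intro L
  induction L with
  | nil => intro W; simp
  | cons c L ih =>
    intro W
    rw [List.foldl_cons]
    exact (subset_st B cost W c).trans (ih _)

lemma foldl_subset_union (B : ℕ) (cost : C → ℕ) : ∀ (L : List C) (W : Finset C),
    L.foldl (st B cost) W ⊆ W ∪ L.toFinset := by
  intro L
  induction L with
  | nil => intro W; simp
  | cons c L ih =>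
    intro W
    rw [List.foldl_cons]
    refine (ih _).trans ?_
    intro x hx
    rcases Finset.mem_union.mp hx with h | h
    · rcases Finset.mem_insert.mp (st_subset_insert B cost W c h) with rfl | h'
      · simp
      · exact Finset.mem_union_left _ h'
    · simp only [List.toFinset_cons]
      exact Finset.mem_union_right _ (Finset.mem_insert_of_mem h)

lemma added_cond (B : ℕ) (cost : C → ℕ) {L₁ L₂ : List C} {a : C}
    (h1 : a ∉ L₁) (h2 : a ∉ L₂)
    (hmem : a ∈ (L₁ ++ a :: L₂).foldl (st B cost) ∅) :
    (∑ x ∈ L₁.foldl (st B cost) ∅, cost x) + cost a ≤ B := by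
  by_contra h
  rw [List.foldl_append, List.foldl_cons] at hmem
  have hstep : st B cost (L₁.foldl (st B cost) ∅) a = L₁.foldl (st B cost) ∅ := by
    simp only [st]; rw [if_neg h]
  rw [hstep] at hmem
  rcases Finset.mem_union.mp (foldl_subset_union B cost L₂ _ hmem) with h' | h'
  · rcases Finset.mem_union.mp (foldl_subset_union B cost L₁ ∅ h') with h'' | h''
    · simp at h''
    · exact h1 (List.mem_toFinset.mp h'')
  · exact h2 (List.mem_toFinset.mp h')

lemma all_added (B : ℕ) (cost : C → ℕ) (G : Finset C) (hG : ∑ x ∈ G, cost x ≤ B) :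
    ∀ (L : List C) (W : Finset C), L.Nodup → (∀ x ∈ L, x ∉ W) → W ⊆ G →
      (L.Pairwise fun x y => y ∈ G → x ∈ G) → ∀ g ∈ G, g ∈ L → g ∈ L.foldl (st B cost) W := by
  intro L
  induction L with
  | nil => intro W _ _ _ _ g _ hgL; simp at hgL
  | cons c L ih =>
    intro W hnd hWd hWG hpw g hgG hgL
    rw [List.foldl_cons]
    by_cases hcG : c ∈ G
    · have hcW : c ∉ W := hWd c List.mem_cons_self
      have hfit : (∑ x ∈ W, cost x) + cost c ≤ B := by
        have hsub : (∑ x ∈ insert c W, cost x) ≤ ∑ x ∈ G, cost x :=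
          Finset.sum_le_sum_of_subset (Finset.insert_subset hcG hWG)
        rw [Finset.sum_insert hcW] at hsub
        omega
      have hst : st B cost W c = insert c W := by simp only [st]; rw [if_pos hfit]
      rw [hst]
      rcases List.mem_cons.mp hgL with rfl | hgL'
      · exact foldl_mono B cost L _ (Finset.mem_insert_self g W)
      · refine ih (insert c W) hnd.of_cons ?_ (Finset.insert_subset hcG hWG)
          hpw.of_cons g hgG hgL'
        intro x hx hxW
        rcases Finset.mem_insert.mp hxW with rfl | hxW'
        · exact (List.nodup_cons.mp hnd).1 hx
        · exact hWd x (List.mem_cons_of_mem c hx) hxW'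
    · exfalso
      rcases List.mem_cons.mp hgL with rfl | hgL'
      · exact hcG hgG
      · exact hcG ((List.pairwise_cons.mp hpw).1 g hgL' hgG)

end PBhelp

theorem stmt9 (n k t : ℕ) (u : Fin n → ℕ) (hu : ∀ i, 0 < u i)
    (ht : 0 < t) (hk : 0 < k) (hut : ∀ i, u i < t) (hkn : k < n)
    (hsmall : ∀ S : Finset (Fin n), S.card < k → ∑ i ∈ S, u i < t)
    (prec : Proj8 n k → Proj8 n k → Bool)
    (hlin : IsStrictTotalOrder (Proj8 n k) fun a b => prec a b = true)
    (hpfirst : ∀ c : Proj8 n k, c ≠ pProj8 n k → prec (pProj8 n k) c = true)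
    (F : Finset (Unit × Proj8 n k)) (hF : F.card ≤ k)
    (hwin : pProj8 n k ∈ PB.greedyCost ((E8 u t k).flip F) prec) :
    F.card = k ∧
      (∃ S : Finset (Fin n), S.card = k ∧
        F = S.image fun i => (((), Sum.inr (Sum.inl i)) : Unit × Proj8 n k)) ∧
      pProj8 n k ∉ ((E8 u t k).flip F).A () := by
  classical
  set E' : PB (Proj8 n k) Unit := (E8 u t k).flip F with hE'
  set T : Finset (Proj8 n k) := F.image Prod.snd with hTdef
  set S : Finset (Fin n) :=
    Finset.univ.filter (fun i => (Sum.inr (Sum.inl i) : Proj8 n k) ∈ T) with hSdef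
  have ptrans : ∀ x y z : Proj8 n k, prec x y = true → prec y z = true → prec x z = true :=
    fun x y z => hlin.toIsStrictOrder.toIsTrans.trans x y z
  have ptri : ∀ x y : Proj8 n k, prec x y = true ∨ x = y ∨ prec y x = true :=
    fun x y => by haveI := hlin; exact trichotomous (r := fun a b => prec a b = true) x y
  -- basic computations
  have hAeq : E'.A () = symmDiff ((Finset.univ : Finset (Proj8 n k)).erase (Sum.inl ())) T := by
    have h0 : E'.A () = symmDiff ((Finset.univ : Finset (Proj8 n k)).erase (Sum.inl ()))
        ((F.filter fun q => q.1 = ()).image Prod.snd) := rfl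
    rw [h0, Finset.filter_true_of_mem (fun q _ => Subsingleton.elim _ _)]
  have hbud : E'.budget = ∑ j, u j := rfl
  have hcostp : E'.cost (pProj8 n k) = t := rfl
  have hcostc : ∀ i : Fin n, E'.cost (Sum.inr (Sum.inl i)) = u i := fun _ => rfl
  have hcostd : ∀ j : Fin (k + 1), E'.cost (Sum.inr (Sum.inr j)) = t + 1 := fun _ => rfl
  have hco : ∀ c, 0 < E'.cost c := by
    intro c
    rcases c with _ | i | j
    · exact ht
    · exact hu i
    · exact Nat.succ_pos t
  have hscore : ∀ c, E'.score c = if c ∈ E'.A () then 1 else 0 := by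
    intro c
    unfold PB.score
    rw [show (Finset.univ : Finset Unit) = {()} from rfl, Finset.filter_singleton]
    split <;> simp
  have hscle : ∀ c, E'.score c ≤ 1 := by
    intro c; rw [hscore]; split <;> simp
  -- membership characterizations
  have hciT : ∀ i : Fin n, ((Sum.inr (Sum.inl i) : Proj8 n k) ∈ T ↔ i ∈ S) := by
    intro i; rw [hSdef]; simp
  have hciA : ∀ i : Fin n, ((Sum.inr (Sum.inl i) : Proj8 n k) ∈ E'.A () ↔ i ∉ S) := by
    intro i
    rw [hAeq, Finset.mem_symmDiff, ← hciT i]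
    simp
  have hpA : (pProj8 n k ∈ E'.A ()) ↔ (pProj8 n k) ∈ T := by
    rw [hAeq, Finset.mem_symmDiff]
    simp [pProj8]
  have hscc : ∀ i : Fin n, i ∉ S → E'.score (Sum.inr (Sum.inl i)) = 1 := by
    intro i hi; rw [hscore, if_pos ((hciA i).mpr hi)]
  -- the set of approved c-projects
  set G : Finset (Proj8 n k) := Sᶜ.image (fun i => (Sum.inr (Sum.inl i) : Proj8 n k)) with hGdef
  have hinj : Function.Injective (fun i : Fin n => (Sum.inr (Sum.inl i) : Proj8 n k)) := by
    intro a b h; simpa using h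
  have hmemG : ∀ x, x ∈ G ↔ ∃ i, i ∉ S ∧ (Sum.inr (Sum.inl i) : Proj8 n k) = x := by
    intro x
    rw [hGdef]
    constructor
    · intro h
      rcases Finset.mem_image.mp h with ⟨i, hi, hix⟩
      exact ⟨i, Finset.mem_compl.mp hi, hix⟩
    · rintro ⟨i, hi, rfl⟩
      exact Finset.mem_image.mpr ⟨i, Finset.mem_compl.mpr hi, rfl⟩
  have hGsum : ∑ x ∈ G, E'.cost x = ∑ i ∈ Sᶜ, u i := by
    rw [hGdef, Finset.sum_image (fun a _ b _ h => hinj h)]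
    rfl
  have hGB : ∑ x ∈ G, E'.cost x ≤ E'.budget := by
    rw [hGsum, hbud]
    exact Finset.sum_le_sum_of_subset (Finset.subset_univ _)
  -- the comparison relation
  set rb : Proj8 n k → Proj8 n k → Bool := fun c c' =>
    decide (E'.score c' * E'.cost c < E'.score c * E'.cost c') ||
      (decide (E'.score c * E'.cost c' = E'.score c' * E'.cost c) &&
        (prec c c' || decide (c = c'))) with hrbdef
  have hrbP : ∀ a b, rb a b = true ↔
      (E'.score b * E'.cost a < E'.score a * E'.cost b ∨
        (E'.score a * E'.cost b = E'.score b * E'.cost a ∧ (prec a b = true ∨ a = b))) := by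
    intro a b; rw [hrbdef]; simp
  have htrans : ∀ a b c, rb a b = true → rb b c = true → rb a c = true := by
    intro a b c h1 h2
    rw [hrbP] at h1 h2 ⊢
    rcases h1 with h1 | ⟨h1e, h1p⟩ <;> rcases h2 with h2 | ⟨h2e, h2p⟩
    · left
      have key : E'.score c * E'.cost a * E'.cost b < E'.score a * E'.cost c * E'.cost b := by
        calc E'.score c * E'.cost a * E'.cost b
            = E'.score c * E'.cost b * E'.cost a := by ring
          _ < E'.score b * E'.cost c * E'.cost a := (Nat.mul_lt_mul_right (hco a)).mpr h2
          _ = E'.score b * E'.cost a * E'.cost c := by ring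
          _ < E'.score a * E'.cost b * E'.cost c := (Nat.mul_lt_mul_right (hco c)).mpr h1
          _ = E'.score a * E'.cost c * E'.cost b := by ring
      exact (Nat.mul_lt_mul_right (hco b)).mp key
    · left
      have key : E'.score c * E'.cost a * E'.cost b < E'.score a * E'.cost c * E'.cost b := by
        calc E'.score c * E'.cost a * E'.cost b
            = E'.score c * E'.cost b * E'.cost a := by ring
          _ = E'.score b * E'.cost c * E'.cost a := by rw [h2e]
          _ = E'.score b * E'.cost a * E'.cost c := by ring
          _ < E'.score a * E'.cost b * E'.cost c := (Nat.mul_lt_mul_right (hco c)).mpr h1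
          _ = E'.score a * E'.cost c * E'.cost b := by ring
      exact (Nat.mul_lt_mul_right (hco b)).mp key
    · left
      have key : E'.score c * E'.cost a * E'.cost b < E'.score a * E'.cost c * E'.cost b := by
        calc E'.score c * E'.cost a * E'.cost b
            = E'.score c * E'.cost b * E'.cost a := by ring
          _ < E'.score b * E'.cost c * E'.cost a := (Nat.mul_lt_mul_right (hco a)).mpr h2
          _ = E'.score b * E'.cost a * E'.cost c := by ring
          _ = E'.score a * E'.cost b * E'.cost c := by rw [h1e]
          _ = E'.score a * E'.cost c * E'.cost b := by ring
      exact (Nat.mul_lt_mul_right (hco b)).mp key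
    · right
      constructor
      · have key : E'.score a * E'.cost c * E'.cost b = E'.score c * E'.cost a * E'.cost b := by
          calc E'.score a * E'.cost c * E'.cost b
              = E'.score a * E'.cost b * E'.cost c := by ring
            _ = E'.score b * E'.cost a * E'.cost c := by rw [h1e]
            _ = E'.score b * E'.cost c * E'.cost a := by ring
            _ = E'.score c * E'.cost b * E'.cost a := by rw [h2e]
            _ = E'.score c * E'.cost a * E'.cost b := by ring
        exact Nat.eq_of_mul_eq_mul_right (hco b) key
      · rcases h1p with hp1 | rfl
        · rcases h2p with hp2 | rfl
          · exact Or.inl (ptrans a b c hp1 hp2)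
          · exact Or.inl hp1
        · rcases h2p with hp2 | rfl
          · exact Or.inl hp2
          · exact Or.inr rfl
  have htotal : ∀ a b, (rb a b || rb b a) = true := by
    intro a b
    rw [Bool.or_eq_true, hrbP, hrbP]
    rcases lt_trichotomy (E'.score b * E'.cost a) (E'.score a * E'.cost b) with h | h | h
    · exact Or.inl (Or.inl h)
    · rcases ptri a b with hp | rfl | hp
      · exact Or.inl (Or.inr ⟨h.symm, Or.inl hp⟩)
      · exact Or.inl (Or.inr ⟨h.symm, Or.inr rfl⟩)
      · exact Or.inr (Or.inr ⟨h, Or.inl hp⟩)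
    · exact Or.inr (Or.inl h)
  -- the consideration order
  set L : List (Proj8 n k) := PB.consOrderCost E' prec with hLdef
  have hLm : L = (Finset.univ : Finset (Proj8 n k)).toList.mergeSort rb := by
    rw [hLdef, hrbdef]; rfl
  have hperm : L.Perm (Finset.univ : Finset (Proj8 n k)).toList := by
    rw [hLm]; exact List.mergeSort_perm _ _
  have hnd : L.Nodup := hperm.symm.nodup (Finset.nodup_toList _)
  have hmemL : ∀ x : Proj8 n k, x ∈ L := fun x =>
    hperm.mem_iff.mpr (Finset.mem_toList.mpr (Finset.mem_univ x))
  have hpair : L.Pairwise (fun a b => rb a b = true) := by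
    rw [hLm]
    exact List.pairwise_mergeSort htrans htotal _
  -- downward closure of G along rb
  have hdc : ∀ a b : Proj8 n k, rb a b = true → b ∈ G → a ∈ G := by
    intro a b hab hbG
    rcases (hmemG b).mp hbG with ⟨i, hiS, rfl⟩
    rw [hrbP] at hab
    rw [hscc i hiS, hcostc i, one_mul] at hab
    have hkey : E'.cost a ≤ u i ∧ E'.score a = 1 := by
      rcases Nat.lt_or_ge 0 (E'.score a) with hpos | h0
      · have h1 : E'.score a = 1 := le_antisymm (hscle a) hpos
        rw [h1, one_mul] at hab
        rcases hab with h | ⟨h, _⟩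
        · exact ⟨le_of_lt h, h1⟩
        · exact ⟨le_of_eq h.symm, h1⟩
      · exfalso
        have h0' : E'.score a = 0 := Nat.le_zero.mp h0
        rw [h0', zero_mul] at hab
        have := hco a
        rcases hab with h | ⟨h, _⟩ <;> omega
    obtain ⟨hale, hsa1⟩ := hkey
    rcases a with v | j | j
    · exfalso
      have hca : E'.cost (Sum.inl v : Proj8 n k) = t := rfl
      have := hut i
      omega
    · apply (hmemG _).mpr
      refine ⟨j, ?_, rfl⟩
      intro hj
      have h0 : E'.score (Sum.inr (Sum.inl j)) = 0 := by
        rw [hscore, if_neg (fun hA => ((hciA j).mp hA) hj)]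
      omega
    · exfalso
      have hca : E'.cost (Sum.inr (Sum.inr j) : Proj8 n k) = t + 1 := rfl
      have := hut i
      omega
  -- p does not come before any element of G
  have hpnotbefore : ∀ g ∈ G, rb (pProj8 n k) g = true → False := by
    intro g hg hpg
    rcases (hmemG g).mp hg with ⟨i, hiS, rfl⟩
    rw [hrbP] at hpg
    rw [hscc i hiS, hcostc i, hcostp, one_mul] at hpg
    have h3 : E'.score (pProj8 n k) ≤ 1 := hscle _
    have hb : E'.score (pProj8 n k) * u i ≤ u i := by
      have := mul_le_mul_left h3 (u i)
      rwa [one_mul] at this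
    have := hut i
    rcases hpg with h | ⟨h, _⟩ <;> omega
  -- split the order at p
  obtain ⟨L₁, L₂, hsplit⟩ := List.append_of_mem (hmemL (pProj8 n k))
  have hnd' := hnd
  rw [hsplit, List.nodup_append] at hnd'
  obtain ⟨hnd1, hnd2, hdisj⟩ := hnd'
  have hpL1 : pProj8 n k ∉ L₁ := fun h => hdisj _ h _ List.mem_cons_self rfl
  have hpL2 : pProj8 n k ∉ L₂ := (List.nodup_cons.mp hnd2).1
  have hpair' := hpair
  rw [hsplit, List.pairwise_append] at hpair'
  obtain ⟨hpw1, hpw2, hcross⟩ := hpair'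
  -- every member of G occurs before p
  have hGL1 : ∀ g ∈ G, g ∈ L₁ := by
    intro g hg
    have hgL : g ∈ L₁ ++ pProj8 n k :: L₂ := by rw [← hsplit]; exact hmemL g
    rcases List.mem_append.mp hgL with h | h
    · exact h
    · rcases List.mem_cons.mp h with rfl | h'
      · exfalso
        rcases (hmemG _).mp hg with ⟨i, _, hgi⟩
        simp [pProj8] at hgi
      · exact absurd ((List.pairwise_cons.mp hpw2).1 g h') (fun hh => hpnotbefore g hg hh)
  -- the greedy fold
  have hfold : PB.greedyCost E' prec = L.foldl (PBhelp.st E'.budget E'.cost) ∅ := by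
    rw [hLdef]; rfl
  rw [hfold, hsplit] at hwin
  have hcond := PBhelp.added_cond E'.budget E'.cost hpL1 hpL2 hwin
  have hGadded : ∀ g ∈ G, g ∈ L₁.foldl (PBhelp.st E'.budget E'.cost) ∅ := by
    intro g hg
    exact PBhelp.all_added E'.budget E'.cost G hGB L₁ ∅ hnd1 (by simp) (by simp)
      (List.Pairwise.imp (fun {a b} h hb => hdc a b h hb) hpw1) g hg (hGL1 g hg)
  have hWcost : ∑ x ∈ G, E'.cost x ≤
      ∑ x ∈ L₁.foldl (PBhelp.st E'.budget E'.cost) ∅, E'.cost x :=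
    Finset.sum_le_sum_of_subset (fun g hg => hGadded g hg)
  have hkey : (∑ i ∈ Sᶜ, u i) + t ≤ ∑ j, u j := by
    rw [← hGsum, ← hbud, ← hcostp]
    exact le_trans (Nat.add_le_add_right hWcost _) hcond
  have hsplitsum : (∑ i ∈ S, u i) + ∑ i ∈ Sᶜ, u i = ∑ i, u i :=
    Finset.sum_add_sum_compl S u
  have hSsum : t ≤ ∑ i ∈ S, u i := by omega
  have hSk : k ≤ S.card := by
    by_contra h
    have := hsmall S (by omega)
    omega
  -- cardinality chase
  have hTF : T.card ≤ F.card := by rw [hTdef]; exact Finset.card_image_le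
  have himg : S.image (fun i => (Sum.inr (Sum.inl i) : Proj8 n k)) ⊆ T := by
    intro x hx
    rcases Finset.mem_image.mp hx with ⟨i, hiS, rfl⟩
    exact (hciT i).mpr hiS
  have hcardim : (S.image fun i => (Sum.inr (Sum.inl i) : Proj8 n k)).card = S.card :=
    Finset.card_image_of_injective _ hinj
  have hST : S.card ≤ T.card := hcardim ▸ Finset.card_le_card himg
  have hScard : S.card = k := by omega
  have hFcard : F.card = k := by omega
  have hTeq : T = S.image (fun i => (Sum.inr (Sum.inl i) : Proj8 n k)) :=
    (Finset.eq_of_subset_of_card_le himg (by omega)).symm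
  -- structure of F
  have hFeq : F = S.image (fun i => (((), Sum.inr (Sum.inl i)) : Unit × Proj8 n k)) := by
    ext q
    obtain ⟨v, c⟩ := q
    constructor
    · intro hq
      have hcT : c ∈ T := by
        rw [hTdef]
        exact Finset.mem_image.mpr ⟨(v, c), hq, rfl⟩
      rw [hTeq] at hcT
      rcases Finset.mem_image.mp hcT with ⟨i, hiS, hic⟩
      refine Finset.mem_image.mpr ⟨i, hiS, ?_⟩
      cases v
      rw [hic]
    · intro hq
      rcases Finset.mem_image.mp hq with ⟨i, hiS, hic⟩
      have hcT : (Sum.inr (Sum.inl i) : Proj8 n k) ∈ T := (hciT i).mpr hiS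
      rw [hTdef] at hcT
      rcases Finset.mem_image.mp hcT with ⟨q', hq', hq'c⟩
      have hq'eq : q' = (v, c) := by
        obtain ⟨v', c'⟩ := q'
        cases v'
        cases v
        have h1 : c = Sum.inr (Sum.inl i) := by
          have := congrArg Prod.snd hic
          simpa using this.symm
        simp only [Prod.mk.injEq, true_and]
        simp only at hq'c
        rw [hq'c, h1]
      rw [← hq'eq]
      exact hq'
  -- p is not approved after the flips
  have hpT : pProj8 n k ∉ T := by
    rw [hTeq]
    intro h
    rcases Finset.mem_image.mp h with ⟨i, _, hic⟩
    simp [pProj8] at hic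
  exact ⟨hFcard, ⟨S, hScard, hFeq⟩, fun hpa => hpT (hpA.mp hpa)⟩
end

section
/- For every i with 2 ≤ i ≤ m, every s ∈ {0,…,n}, and every natural number ρ: f(i, s, ρ) = Σ_{s' = s + t_i}^{n} Σ_{x = 0}^{ρ} f(i−1, s', ρ − x) · g(i, s, x). -/
/-! Statement 11: the dynamic-programming recurrence for counting flip
assignments in the polynomial-space FPT algorithm for
`#GreedyAV-Flip-Bribery`.

Projects are indexed `1, 2, …` (1-based); `A j` is the initial approver set
of project `c_j`, and `prec` encodes the tie-breaking order on (indices of)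
projects: `prec j j'` means `c_j ≻ c_{j'}`. -/

namespace Stmt11

variable {V : Type} [Fintype V] [DecidableEq V]

/-- `tt prec j = 1` if `c_j ≻ c_{j−1}`, and `0` otherwise. -/
def tt (prec : ℕ → ℕ → Bool) (j : ℕ) : ℕ := if prec j (j - 1) then 1 else 0

/-- The resulting score of project `c_{j+1}` (1-based) under the flip
assignment `F` for `(c_1, …, c_i)`: `|A (j+1) Δ F j|`. -/
def sc (A : ℕ → Finset V) {i : ℕ} (F : Fin i → Finset V) (j : Fin i) : ℕ :=
  (symmDiff (A ((j : ℕ) + 1)) (F j)).card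

/-- `f A prec i s ρ` is the number of flip assignments `(F_1, …, F_i)` of size
exactly `ρ` whose resulting scores `s_1, …, s_i` satisfy
`s_{j−1} ≥ s_j + t_j` for every `2 ≤ j ≤ i` and `s_i = s`. -/
def f (A : ℕ → Finset V) (prec : ℕ → ℕ → Bool) (i s ρ : ℕ) : ℕ :=
  (Finset.univ.filter fun F : Fin i → Finset V =>
    (∑ j, (F j).card) = ρ ∧
    (∀ j j' : Fin i, (j' : ℕ) = (j : ℕ) + 1 →
      sc A F j' + tt prec ((j : ℕ) + 2) ≤ sc A F j) ∧
    (∀ j : Fin i, (j : ℕ) = i - 1 → sc A F j = s)).card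

/-- `g A i s x` is the number of subsets `F ⊆ V` with `|F| = x` and
`|A i Δ F| = s`. -/
def g (A : ℕ → Finset V) (i s x : ℕ) : ℕ :=
  (Finset.univ.filter fun F : Finset V =>
    F.card = x ∧ (symmDiff (A i) F).card = s).card

set_option linter.unusedSectionVars false

lemma sc_le (A : ℕ → Finset V) {i : ℕ} (F : Fin i → Finset V) (j : Fin i) :
    sc A F j ≤ Fintype.card V := Finset.card_le_univ _

lemma sc_init (A : ℕ → Finset V) {k : ℕ} (F : Fin (k + 1) → Finset V) (j : Fin k) :
    sc A (Fin.init F) j = sc A F j.castSucc := by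
  simp [sc, Fin.init]

lemma sc_snoc_castSucc (A : ℕ → Finset V) {k : ℕ} (G : Fin k → Finset V) (L : Finset V)
    (j : Fin k) : sc A (Fin.snoc G L) j.castSucc = sc A G j := by
  simp [sc]

lemma sc_snoc_last (A : ℕ → Finset V) {k : ℕ} (G : Fin k → Finset V) (L : Finset V) :
    sc A (Fin.snoc G L) (Fin.last k) = (symmDiff (A (k + 1)) L).card := by
  simp [sc]

theorem stmt11 (A : ℕ → Finset V) (prec : ℕ → ℕ → Bool) (m : ℕ)
    (i s ρ : ℕ) (hi2 : 2 ≤ i) (him : i ≤ m) (hs : s ≤ Fintype.card V) :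
    f A prec i s ρ =
      ∑ s' ∈ Finset.Icc (s + tt prec i) (Fintype.card V),
        ∑ x ∈ Finset.range (ρ + 1),
          f A prec (i - 1) s' (ρ - x) * g A i s x := by
  obtain ⟨k, rfl⟩ : ∃ k, i = k + 1 := ⟨i - 1, by omega⟩
  have hk : 1 ≤ k := by omega
  have hk1 : k - 1 < k + 1 := by omega
  have hk1' : k - 1 < k := by omega
  simp only [Nat.add_sub_cancel]
  -- the set counted by the LHS
  set T : Finset (Fin (k + 1) → Finset V) :=
    Finset.univ.filter fun F : Fin (k + 1) → Finset V =>
      (∑ j, (F j).card) = ρ ∧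
      (∀ j j' : Fin (k + 1), (j' : ℕ) = (j : ℕ) + 1 →
        sc A F j' + tt prec ((j : ℕ) + 2) ≤ sc A F j) ∧
      (∀ j : Fin (k + 1), (j : ℕ) = (k + 1) - 1 → sc A F j = s) with hT
  have hfT : f A prec (k + 1) s ρ = T.card := rfl
  rw [hfT]
  have memT : ∀ F, F ∈ T ↔
      ((∑ j, (F j).card) = ρ ∧
      (∀ j j' : Fin (k + 1), (j' : ℕ) = (j : ℕ) + 1 →
        sc A F j' + tt prec ((j : ℕ) + 2) ≤ sc A F j) ∧
      (∀ j : Fin (k + 1), (j : ℕ) = (k + 1) - 1 → sc A F j = s)) := by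
    intro F; simp [hT]
  -- the last score is s
  have last_eq : ∀ F ∈ T, sc A F (Fin.last k) = s := by
    intro F hF
    exact ((memT F).1 hF).2.2 (Fin.last k) (by simp)
  -- step 1 : fiber over the second-to-last score
  have H1 : ∀ F ∈ T, sc A F ⟨k - 1, hk1⟩ ∈
      Finset.Icc (s + tt prec (k + 1)) (Fintype.card V) := by
    intro F hF
    obtain ⟨-, hchain, hlast⟩ := (memT F).1 hF
    have h1 := hchain ⟨k - 1, hk1⟩ (Fin.last k) (by simp; omega)
    have h2 : sc A F (Fin.last k) = s := last_eq F hF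
    rw [h2] at h1
    have h3 : (k - 1) + 2 = k + 1 := by omega
    rw [h3] at h1
    exact Finset.mem_Icc.2 ⟨h1, sc_le A F _⟩
  rw [Finset.card_eq_sum_card_fiberwise H1]
  refine Finset.sum_congr rfl fun s' hs' => ?_
  -- step 2 : fiber over the size of the last flip set
  have H2 : ∀ F ∈ T.filter (fun F => sc A F ⟨k - 1, hk1⟩ = s'),
      (F (Fin.last k)).card ∈ Finset.range (ρ + 1) := by
    intro F hF
    obtain ⟨hsum, -, -⟩ := (memT F).1 (Finset.mem_filter.1 hF).1
    have : (F (Fin.last k)).card ≤ ∑ j, (F j).card :=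
      Finset.single_le_sum (f := fun j : Fin (k + 1) => (F j).card)
        (fun j _ => Nat.zero_le _) (Finset.mem_univ _)
    rw [Finset.mem_range]; omega
  rw [Finset.card_eq_sum_card_fiberwise H2]
  refine Finset.sum_congr rfl fun x hx => ?_
  rw [Finset.mem_range] at hx
  rw [Finset.mem_Icc] at hs'
  -- step 3 : bijection with the product
  rw [f, g, ← Finset.card_product]
  rw [Finset.filter_filter]
  refine Finset.card_nbij' (fun F => (Fin.init F, F (Fin.last k)))
    (fun p => Fin.snoc p.1 p.2) ?_ ?_ ?_ ?_
  · intro F hF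
    rw [Finset.mem_coe, Finset.mem_filter] at hF
    obtain ⟨hF1, hkey1, hkey2⟩ := hF
    obtain ⟨hsum, hchain, hlast⟩ := (memT F).1 hF1
    rw [Finset.mem_coe, Finset.mem_product]
    constructor
    · simp only [Finset.mem_filter, Finset.mem_univ, true_and]
      refine ⟨?_, ?_, ?_⟩
      · rw [Fin.sum_univ_castSucc] at hsum
        have : ∀ j : Fin k, (Fin.init F j).card = (F j.castSucc).card := by
          intro j; simp [Fin.init]
        rw [Finset.sum_congr rfl fun j _ => this j]
        omega
      · intro j j' hjj'
        rw [sc_init, sc_init]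
        have := hchain j.castSucc j'.castSucc (by simpa using hjj')
        simpa using this
      · intro j hj
        rw [sc_init]
        have hje : j.castSucc = ⟨k - 1, hk1⟩ := by
          apply Fin.ext; simpa using (by omega : (j : ℕ) = k - 1)
        rw [hje]; exact hkey1
    · simp only [Finset.mem_filter, Finset.mem_univ, true_and]
      refine ⟨hkey2, ?_⟩
      have := last_eq F hF1
      rw [sc] at this
      simpa using this
  · intro p hp
    rw [Finset.mem_coe, Finset.mem_product] at hp
    obtain ⟨hp1, hp2⟩ := hp
    simp only [Finset.mem_filter, Finset.mem_univ, true_and] at hp1 hp2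
    obtain ⟨hsum, hchain, hlast⟩ := hp1
    obtain ⟨hcard, hsd⟩ := hp2
    rw [Finset.mem_coe, Finset.mem_filter]
    have hscprev : sc A (Fin.snoc p.1 p.2) ⟨k - 1, hk1⟩ = s' := by
      have : (⟨k - 1, hk1⟩ : Fin (k + 1)) = (⟨k - 1, hk1'⟩ : Fin k).castSucc := rfl
      rw [this, sc_snoc_castSucc]
      exact hlast ⟨k - 1, hk1'⟩ rfl
    have hsclast : sc A (Fin.snoc p.1 p.2) (Fin.last k) = s := by
      rw [sc_snoc_last]; exact hsd
    refine ⟨(memT _).2 ⟨?_, ?_, ?_⟩, hscprev, by simpa using hcard⟩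
    · rw [Fin.sum_univ_castSucc]
      simp only [Fin.snoc_castSucc, Fin.snoc_last]
      omega
    · intro j j' hjj'
      by_cases hj' : (j' : ℕ) = k
      · have hje : j' = Fin.last k := Fin.ext (by simpa using hj')
        have hje2 : j = (⟨k - 1, hk1'⟩ : Fin k).castSucc := Fin.ext (by simp; omega)
        rw [hje, hje2, hsclast, sc_snoc_castSucc]
        have h3 : ((⟨k - 1, hk1'⟩ : Fin k).castSucc : ℕ) + 2 = k + 1 := by simp; omega
        rw [h3]
        have := hlast ⟨k - 1, hk1'⟩ rfl
        rw [this]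
        exact hs'.1
      · have hj'k : (j' : ℕ) < k := by omega
        have hjk : (j : ℕ) < k := by omega
        have he1 : j = (⟨j, hjk⟩ : Fin k).castSucc := Fin.ext rfl
        have he2 : j' = (⟨j', hj'k⟩ : Fin k).castSucc := Fin.ext rfl
        rw [he1, he2, sc_snoc_castSucc, sc_snoc_castSucc]
        have := hchain ⟨j, hjk⟩ ⟨j', hj'k⟩ (by simpa using hjj')
        simpa using this
    · intro j hj
      have : j = Fin.last k := Fin.ext (by simpa using hj)
      rw [this]; exact hsclast
  · intro F _; exact Fin.snoc_init_self F
  · intro p _; simp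


end Stmt11
end

section
/- Let E = (C, V, A, B, cost) be a PB instance with a single voter v (so the voter's initial MES budget is B), and fix a residual tie-breaking linear order ≻ on C. Then MES-Apr(E) = A(v) ∩ GreedyAV(E), where GreedyAV is run with cheaper-first tie-breaking whose residual order is ≻; that is, a project is selected by MES-Apr if and only if it is approved by v and selected by GreedyAV with cheaper-first tie-breaking. -/
/-! The Method of Equal Shares (MES). The tie-breaking order `≻` is modeled by
a `LinearOrder` on the projects (`c ≻ c'`, i.e. `c` is earlier, iff `c < c'`). -/

noncomputable section
open scoped Classical

namespace PB

variable {C V : Type} [Fintype C] [LinearOrder C] [Fintype V] [DecidableEq V]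

/-- The total amount the approvers of `c` pay for it at price-per-utility `q`,
given balances `bal` and utilities `u`: `Σ_{w ∈ A(c)} min(bal w, u w c · q)`. -/
def mesPay (E : PB C V) (u : V → C → ℝ) (bal : V → ℝ) (c : C) (q : ℝ) : ℝ :=
  ∑ w ∈ Finset.univ.filter (fun w => c ∈ E.A w), min (bal w) (u w c * q)

/-- The set of `q ≥ 0` for which `c` is `q`-affordable. -/
def affordQ (E : PB C V) (u : V → C → ℝ) (bal : V → ℝ) (c : C) : Set ℝ :=
  {q : ℝ | 0 ≤ q ∧ mesPay E u bal c q = (E.cost c : ℝ)}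

/-- The smallest `q` for which `c` is `q`-affordable. -/
def qmin (E : PB C V) (u : V → C → ℝ) (bal : V → ℝ) (c : C) : ℝ :=
  sInf (affordQ E u bal c)

/-- One run of MES: as long as some remaining project is `q`-affordable for
some `q`, add the project that is `q`-affordable for the smallest `q` (ties
broken by the order on `C`) and charge its approvers accordingly. -/
def mesRun (E : PB C V) (u : V → C → ℝ) :
    ℕ → Finset C → (V → ℝ) → Finset C
  | 0, _, _ => ∅
  | fuel + 1, remaining, bal =>
    let cands := remaining.filter fun c => (affordQ E u bal c).Nonempty
    if h : cands.Nonempty then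
      let key : C → ℝ ×ₗ C := fun c => toLex (qmin E u bal c, c)
      let best : C := (ofLex ((cands.image key).min' (h.image key))).2
      let q : ℝ := qmin E u bal best
      insert best
        (mesRun E u fuel (remaining.erase best) fun w =>
          if best ∈ E.A w then bal w - min (bal w) (u w best * q) else bal w)
    else ∅

/-- The Method of Equal Shares with utilities `u`: every voter starts with a
balance of `B/|V|`, and projects are bought as long as any is affordable. -/
def mes (E : PB C V) (u : V → C → ℝ) : Finset C :=
  mesRun E u (Fintype.card C) Finset.univ fun _ => (E.budget : ℝ) / (Fintype.card V : ℝ)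

/-- MES-Apr: utility `1` for approved projects and `0` otherwise. -/
def mesApr (E : PB C V) : Finset C :=
  mes E fun w c => if c ∈ E.A w then 1 else 0

/-- MES-Cost: utility `cost(c)` for approved projects and `0` otherwise. -/
def mesCost (E : PB C V) : Finset C :=
  mes E fun w c => if c ∈ E.A w then (E.cost c : ℝ) else 0

end PB

end

/-! Statement 13: on single-voter instances, MES-Apr coincides with
`A(v) ∩ GreedyAV` under cheaper-first tie-breaking (whose residual order is
the tie-breaking order `≻`, i.e. the linear order on `C`). -/

noncomputable section Stmt13Aux
open scoped Classical

namespace Stmt13Aux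

noncomputable def gtake {C : Type} [DecidableEq C] (cost : C → ℕ) : ℝ → List C → Finset C
  | _, [] => ∅
  | b, c :: l => if (cost c : ℝ) ≤ b then insert c (gtake cost (b - cost c) l) else gtake cost b l

lemma gtake_nil {C : Type} [DecidableEq C] (cost : C → ℕ) (b : ℝ) : gtake cost b [] = ∅ := by
  rw [gtake]

lemma gtake_cons {C : Type} [DecidableEq C] (cost : C → ℕ) (b : ℝ) (c : C) (l : List C) :
    gtake cost b (c :: l) =
      if (cost c : ℝ) ≤ b then insert c (gtake cost (b - cost c) l) else gtake cost b l := by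
  rw [gtake]

lemma gtake_eq_empty {C : Type} [DecidableEq C] (cost : C → ℕ) :
    ∀ (l : List C) (b : ℝ), (∀ c ∈ l, b < (cost c : ℝ)) → gtake cost b l = ∅
  | [], b, _ => gtake_nil cost b
  | c :: l, b, h => by
    rw [gtake_cons, if_neg (not_le.2 (h c List.mem_cons_self))]
    exact gtake_eq_empty cost l b fun x hx => h x (List.mem_cons_of_mem _ hx)

variable {C V : Type} [Fintype C] [LinearOrder C] [Fintype V] [DecidableEq V]

def S (E : PB C V) (c c' : C) : Prop :=
  E.cost c < E.cost c' ∨ (E.cost c = E.cost c' ∧ c ≤ c')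

def uApr (E : PB C V) : V → C → ℝ := fun w c => if c ∈ E.A w then 1 else 0

lemma univ_eq (v : V) (hv : ∀ w : V, w = v) : (Finset.univ : Finset V) = {v} := by
  ext w; simp [hv w]

lemma mesPay_eq (E : PB C V) (v : V) (hv : ∀ w : V, w = v) (bal : V → ℝ) (c : C) (q : ℝ) :
    PB.mesPay E (uApr E) bal c q = if c ∈ E.A v then min (bal v) q else 0 := by
  rw [PB.mesPay, univ_eq v hv]
  by_cases hc : c ∈ E.A v
  · rw [Finset.filter_singleton, if_pos hc, Finset.sum_singleton, if_pos hc]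
    simp [uApr, hc]
  · rw [Finset.filter_singleton, if_neg hc, if_neg hc, Finset.sum_empty]

lemma afford_iff (E : PB C V) (v : V) (hcost : ∀ c, 0 < E.cost c) (hv : ∀ w : V, w = v)
    (bal : V → ℝ) (c : C) :
    (PB.affordQ E (uApr E) bal c).Nonempty ↔ c ∈ E.A v ∧ (E.cost c : ℝ) ≤ bal v := by
  constructor
  · rintro ⟨q, hq0, hq⟩
    rw [mesPay_eq E v hv] at hq
    by_cases hc : c ∈ E.A v
    · rw [if_pos hc] at hq
      exact ⟨hc, hq ▸ min_le_left _ _⟩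
    · rw [if_neg hc] at hq
      exact absurd hq.symm (ne_of_gt (by exact_mod_cast hcost c))
  · rintro ⟨hc, hle⟩
    refine ⟨(E.cost c : ℝ), Nat.cast_nonneg _, ?_⟩
    rw [mesPay_eq E v hv, if_pos hc, min_eq_right hle]

lemma qmin_eq (E : PB C V) (v : V) (hv : ∀ w : V, w = v) (bal : V → ℝ) (c : C)
    (hc : c ∈ E.A v) (hle : (E.cost c : ℝ) ≤ bal v) :
    PB.qmin E (uApr E) bal c = (E.cost c : ℝ) := by
  have hmem : (E.cost c : ℝ) ∈ PB.affordQ E (uApr E) bal c :=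
    ⟨Nat.cast_nonneg _, by rw [mesPay_eq E v hv, if_pos hc, min_eq_right hle]⟩
  have hlb : ∀ q ∈ PB.affordQ E (uApr E) bal c, (E.cost c : ℝ) ≤ q := by
    rintro q ⟨hq0, hq⟩
    rw [mesPay_eq E v hv, if_pos hc] at hq
    exact hq ▸ min_le_right _ _
  exact le_antisymm (csInf_le ⟨_, hlb⟩ hmem) (le_csInf ⟨_, hmem⟩ hlb)

lemma mesRun_eq (E : PB C V) (v : V) (hcost : ∀ c, 0 < E.cost c) (hv : ∀ w : V, w = v) :
    ∀ (fuel : ℕ) (R : Finset C) (bal : V → ℝ) (l : List C),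
      R.card ≤ fuel → l.Pairwise (S E) → l.Nodup →
      (∀ c, c ∈ l ↔ c ∈ R ∧ c ∈ E.A v) →
      PB.mesRun E (uApr E) fuel R bal = gtake E.cost (bal v) l := by
  intro fuel
  induction fuel with
  | zero =>
    intro R bal l hcard _ _ hmem
    have hR : R = ∅ := Finset.card_eq_zero.1 (Nat.le_zero.1 hcard)
    have hl : l = [] := by
      cases l with
      | nil => rfl
      | cons a t => exact absurd ((hmem a).1 List.mem_cons_self).1 (by simp [hR])
    rw [hl, gtake_nil, PB.mesRun]
  | succ n ih =>
    intro R bal l hcard hsort hnd hmem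
    simp only [PB.mesRun]
    cases l with
    | nil =>
      have hcands : ¬ (R.filter fun c => (PB.affordQ E (uApr E) bal c).Nonempty).Nonempty := by
        rintro ⟨c, hc⟩
        rw [Finset.mem_filter, afford_iff E v hcost hv] at hc
        exact absurd ((hmem c).2 ⟨hc.1, hc.2.1⟩) List.not_mem_nil
      rw [dif_neg hcands, gtake_nil]
    | cons a t =>
      obtain ⟨hSa, hst⟩ := List.pairwise_cons.1 hsort
      have haRA : a ∈ R ∧ a ∈ E.A v := (hmem a).1 List.mem_cons_self
      by_cases hfit : (E.cost a : ℝ) ≤ bal v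
      · -- head affordable
        have hacand : a ∈ R.filter fun c => (PB.affordQ E (uApr E) bal c).Nonempty := by
          rw [Finset.mem_filter, afford_iff E v hcost hv]
          exact ⟨haRA.1, haRA.2, hfit⟩
        have hne : (R.filter fun c => (PB.affordQ E (uApr E) bal c).Nonempty).Nonempty :=
          ⟨a, hacand⟩
        rw [dif_pos hne]
        have hmin : (((R.filter fun c => (PB.affordQ E (uApr E) bal c).Nonempty).image
            (fun c => toLex (PB.qmin E (uApr E) bal c, c))).min' (hne.image _)) =
            toLex ((E.cost a : ℝ), a) := by
          apply le_antisymm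
          · have := Finset.min'_le _ _
              (Finset.mem_image_of_mem (fun c => toLex (PB.qmin E (uApr E) bal c, c)) hacand)
            exact le_of_le_of_eq this
              (by rw [qmin_eq E v hv bal a haRA.2 hfit])
          · apply Finset.le_min'
            intro y hy
            obtain ⟨x, hx, rfl⟩ := Finset.mem_image.1 hy
            rw [Finset.mem_filter, afford_iff E v hcost hv] at hx
            have hxl : x ∈ a :: t := (hmem x).2 ⟨hx.1, hx.2.1⟩
            rw [qmin_eq E v hv bal x hx.2.1 hx.2.2, Prod.Lex.le_iff]
            simp only [ofLex_toLex]
            rcases List.mem_cons.1 hxl with rfl | hxt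
            · exact Or.inr ⟨rfl, le_refl _⟩
            · rcases hSa x hxt with h | ⟨h1, h2⟩
              · exact Or.inl (by exact_mod_cast h)
              · exact Or.inr ⟨by exact_mod_cast h1, h2⟩
        rw [hmin]
        have hofLex : (ofLex (toLex ((E.cost a : ℝ), a))).2 = a := rfl
        rw [hofLex]
        have hq : PB.qmin E (uApr E) bal a = (E.cost a : ℝ) := qmin_eq E v hv bal a haRA.2 hfit
        rw [hq]
        have hbal' : (fun w => if a ∈ E.A w then bal w - min (bal w) (uApr E w a * (E.cost a : ℝ))
            else bal w) v = bal v - (E.cost a : ℝ) := by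
          simp [uApr, haRA.2, one_mul, min_eq_right hfit]
        rw [gtake_cons, if_pos hfit]
        congr 1
        rw [← hbal']
        apply ih
        · have : a ∈ R := haRA.1
          rw [Finset.card_erase_of_mem this]
          omega
        · exact hst
        · exact hnd.of_cons
        · intro c
          rw [Finset.mem_erase]
          constructor
          · intro hc
            have hcl : c ∈ a :: t := List.mem_cons_of_mem _ hc
            refine ⟨⟨fun h => ?_, ((hmem c).1 hcl).1⟩, ((hmem c).1 hcl).2⟩
            exact (List.nodup_cons.1 hnd).1 (h ▸ hc)
          · rintro ⟨⟨hne', hcR⟩, hcA⟩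
            rcases List.mem_cons.1 ((hmem c).2 ⟨hcR, hcA⟩) with rfl | h
            · exact absurd rfl hne'
            · exact h
      · -- head not affordable: nothing is
        have hcands : ¬ (R.filter fun c => (PB.affordQ E (uApr E) bal c).Nonempty).Nonempty := by
          rintro ⟨c, hc⟩
          rw [Finset.mem_filter, afford_iff E v hcost hv] at hc
          have hcl : c ∈ a :: t := (hmem c).2 ⟨hc.1, hc.2.1⟩
          have hle : (E.cost a : ℝ) ≤ (E.cost c : ℝ) := by
            rcases List.mem_cons.1 hcl with rfl | hct
            · exact le_refl _
            · rcases hSa c hct with h | ⟨h1, _⟩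
              · exact_mod_cast le_of_lt h
              · exact_mod_cast le_of_eq h1
          exact hfit (le_trans hle hc.2.2)
        rw [dif_neg hcands, gtake_cons, if_neg hfit]
        rw [gtake_eq_empty]
        intro c hc
        have hle : (E.cost a : ℝ) ≤ (E.cost c : ℝ) := by
          rcases hSa c hc with h | ⟨h1, _⟩
          · exact_mod_cast le_of_lt h
          · exact_mod_cast le_of_eq h1
        exact lt_of_lt_of_le (not_le.1 hfit) hle

lemma score_eq (E : PB C V) (v : V) (hv : ∀ w : V, w = v) (c : C) :
    E.score c = if c ∈ E.A v then 1 else 0 := by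
  rw [PB.score, univ_eq v hv, Finset.filter_singleton]
  split <;> simp

def rB (E : PB C V) : C → C → Bool := fun c c' =>
  decide (E.score c' < E.score c) ||
    (decide (E.score c = E.score c') &&
      (PB.cheaperFirst E.cost (fun a b => decide (a < b)) c c' || decide (c = c')))

def K (E : PB C V) : C → ℕᵒᵈ ×ₗ (ℕ ×ₗ C) := fun c =>
  toLex (OrderDual.toDual (E.score c), toLex (E.cost c, c))

lemma rB_iff (E : PB C V) (c c' : C) : rB E c c' = true ↔ K E c ≤ K E c' := by
  simp only [K, Prod.Lex.le_iff]
  simp only [rB, PB.cheaperFirst, Bool.or_eq_true, Bool.and_eq_true, decide_eq_true_eq,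
    OrderDual.toDual_lt_toDual, OrderDual.toDual_inj, Prod.Lex.le_iff]
  constructor
  · rintro (h | ⟨h1, (h2 | ⟨h2, h3⟩) | rfl⟩)
    · exact Or.inl h
    · exact Or.inr ⟨h1, Or.inl h2⟩
    · exact Or.inr ⟨h1, Or.inr ⟨h2, le_of_lt h3⟩⟩
    · exact Or.inr ⟨rfl, Or.inr ⟨rfl, le_refl _⟩⟩
  · rintro (h | ⟨h1, h2 | ⟨h2, h3⟩⟩)
    · exact Or.inl h
    · exact Or.inr ⟨h1, Or.inl (Or.inl h2)⟩
    · rcases lt_or_eq_of_le h3 with h4 | rfl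
      · exact Or.inr ⟨h1, Or.inl (Or.inr ⟨h2, h4⟩)⟩
      · exact Or.inr ⟨h1, Or.inr rfl⟩

lemma rB_trans (E : PB C V) (a b c : C) (h1 : rB E a b = true) (h2 : rB E b c = true) :
    rB E a c = true :=
  (rB_iff E a c).2 (le_trans ((rB_iff E a b).1 h1) ((rB_iff E b c).1 h2))

lemma rB_total (E : PB C V) (a b : C) : (rB E a b || rB E b a) = true := by
  rcases le_total (K E a) (K E b) with h | h
  · simp [(rB_iff E a b).2 h]
  · simp [(rB_iff E b a).2 h]

lemma greedy_go (E : PB C V) (v : V) (hv : ∀ w : V, w = v) :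
    ∀ (L : List C) (W : Finset C), L.Nodup → (∀ c ∈ L, c ∉ W) →
      L.Pairwise (fun a b => rB E a b = true) →
      E.A v ∩ L.foldl
          (fun W c => if (∑ x ∈ W, E.cost x) + E.cost c ≤ E.budget then insert c W else W) W
        = (E.A v ∩ W) ∪
            gtake E.cost ((E.budget : ℝ) - ((∑ x ∈ W, E.cost x : ℕ) : ℝ))
              (L.filter fun c => decide (c ∈ E.A v)) := by
  intro L
  induction L with
  | nil => intro W _ _ _; simp [gtake_nil]
  | cons a t ih =>
    intro W hnd hdisj hsort
    obtain ⟨hra, hst⟩ := List.pairwise_cons.1 hsort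
    have haW : a ∉ W := hdisj a List.mem_cons_self
    have hfit_iff : ((∑ x ∈ W, E.cost x) + E.cost a ≤ E.budget) ↔
        ((E.cost a : ℝ) ≤ (E.budget : ℝ) - ((∑ x ∈ W, E.cost x : ℕ) : ℝ)) := by
      rw [le_sub_iff_add_le, ← Nat.cast_add, Nat.cast_le]
      omega
    rw [List.foldl_cons]
    by_cases hcA : a ∈ E.A v
    · rw [List.filter_cons_of_pos (by simpa using hcA)]
      by_cases hfit : (∑ x ∈ W, E.cost x) + E.cost a ≤ E.budget
      · rw [if_pos hfit]
        have hdisj' : ∀ c ∈ t, c ∉ insert a W := by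
          intro c hc
          rw [Finset.mem_insert]
          rintro (rfl | h)
          · exact (List.nodup_cons.1 hnd).1 hc
          · exact hdisj c (List.mem_cons_of_mem _ hc) h
        rw [ih (insert a W) hnd.of_cons hdisj' hst, Finset.sum_insert haW,
          gtake_cons, if_pos (hfit_iff.1 hfit)]
        have harith : (E.budget : ℝ) - ((E.cost a + ∑ x ∈ W, E.cost x : ℕ) : ℝ)
            = ((E.budget : ℝ) - ((∑ x ∈ W, E.cost x : ℕ) : ℝ)) - (E.cost a : ℝ) := by
          push_cast; ring
        rw [harith]
        ext x
        simp only [Finset.mem_union, Finset.mem_inter, Finset.mem_insert]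
        by_cases hx : x = a
        · subst hx; simp [hcA]
        · simp [hx]
      · rw [if_neg hfit,
          ih W hnd.of_cons (fun c hc => hdisj c (List.mem_cons_of_mem _ hc)) hst,
          gtake_cons, if_neg (fun h => hfit (hfit_iff.2 h))]
    · have htnil : (t.filter fun c => decide (c ∈ E.A v)) = [] := by
        rw [List.filter_eq_nil_iff]
        intro x hx
        simp only [decide_eq_true_eq]
        intro hxA
        have h := (rB_iff E a x).1 (hra x hx)
        simp only [K, Prod.Lex.le_iff, ofLex_toLex] at h
        rw [OrderDual.toDual_lt_toDual, OrderDual.toDual_inj,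
          score_eq E v hv, score_eq E v hv, if_pos hxA, if_neg hcA] at h
        rcases h with h | ⟨h1, _⟩ <;> omega
      rw [List.filter_cons_of_neg (by simpa using hcA), htnil]
      by_cases hfit : (∑ x ∈ W, E.cost x) + E.cost a ≤ E.budget
      · rw [if_pos hfit]
        have hdisj' : ∀ c ∈ t, c ∉ insert a W := by
          intro c hc
          rw [Finset.mem_insert]
          rintro (rfl | h)
          · exact (List.nodup_cons.1 hnd).1 hc
          · exact hdisj c (List.mem_cons_of_mem _ hc) h
        rw [ih (insert a W) hnd.of_cons hdisj' hst, htnil, gtake_nil, gtake_nil,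
          Finset.union_empty, Finset.union_empty]
        ext x
        simp only [Finset.mem_inter, Finset.mem_insert]
        constructor
        · rintro ⟨h1, rfl | h2⟩
          · exact absurd h1 hcA
          · exact ⟨h1, h2⟩
        · rintro ⟨h1, h2⟩; exact ⟨h1, Or.inr h2⟩
      · rw [if_neg hfit,
          ih W hnd.of_cons (fun c hc => hdisj c (List.mem_cons_of_mem _ hc)) hst, htnil]

end Stmt13Aux
end Stmt13Aux

theorem stmt13 {C V : Type} [Fintype C] [LinearOrder C] [Fintype V] [DecidableEq V]
    (E : PB C V) (hcost : ∀ c, 0 < E.cost c)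
    (v : V) (hv : ∀ w : V, w = v) :
    PB.mesApr E =
      E.A v ∩ PB.greedyAV E (PB.cheaperFirst E.cost fun c c' => decide (c < c')) := by
  classical
  have hcV : Fintype.card V = 1 := by
    rw [← Finset.card_univ, Stmt13Aux.univ_eq v hv, Finset.card_singleton]
  set L := (Finset.univ : Finset C).toList.mergeSort (Stmt13Aux.rB E) with hL
  have hLdef : PB.consOrderAV E (PB.cheaperFirst E.cost fun c c' => decide (c < c')) = L := rfl
  have hperm : L.Perm (Finset.univ : Finset C).toList := List.mergeSort_perm _ _
  have hndL : L.Nodup := hperm.nodup_iff.2 (Finset.nodup_toList _)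
  have hmemL : ∀ c : C, c ∈ L := fun c => hperm.mem_iff.2 (Finset.mem_toList.2 (Finset.mem_univ c))
  have hsortL : L.Pairwise (fun a b => Stmt13Aux.rB E a b = true) :=
    List.pairwise_mergeSort (Stmt13Aux.rB_trans E) (Stmt13Aux.rB_total E) _
  set l := L.filter (fun c => decide (c ∈ E.A v)) with hldef
  have hsl : l.Pairwise (Stmt13Aux.S E) := by
    refine List.Pairwise.imp_of_mem ?_ (List.Pairwise.filter _ hsortL)
    intro a b ha hb hr
    have haA : a ∈ E.A v := by simpa using (List.mem_filter.1 ha).2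
    have hbA : b ∈ E.A v := by simpa using (List.mem_filter.1 hb).2
    have h := (Stmt13Aux.rB_iff E a b).1 hr
    simp only [Stmt13Aux.K, Prod.Lex.le_iff, ofLex_toLex] at h
    rw [OrderDual.toDual_lt_toDual, OrderDual.toDual_inj,
      Stmt13Aux.score_eq E v hv, Stmt13Aux.score_eq E v hv, if_pos haA, if_pos hbA] at h
    rcases h with h | ⟨_, h2⟩
    · omega
    · exact h2
  have hndl : l.Nodup := hndL.filter _
  have hml : ∀ c, c ∈ l ↔ c ∈ (Finset.univ : Finset C) ∧ c ∈ E.A v := by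
    intro c
    rw [hldef, List.mem_filter]
    simp [hmemL c]
  have hmes : PB.mesApr E = Stmt13Aux.gtake E.cost ((E.budget : ℝ)) l := by
    have h := Stmt13Aux.mesRun_eq E v hcost hv (Fintype.card C) Finset.univ
      (fun _ => (E.budget : ℝ) / (Fintype.card V : ℝ)) l
      (le_of_eq Finset.card_univ) hsl hndl hml
    rw [PB.mesApr, PB.mes,
      show (fun (w : V) (c : C) => if c ∈ E.A w then (1 : ℝ) else 0) = Stmt13Aux.uApr E from rfl,
      h, hcV]
    norm_num
  have hgre : E.A v ∩ PB.greedyAV E (PB.cheaperFirst E.cost fun c c' => decide (c < c')) =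
      Stmt13Aux.gtake E.cost ((E.budget : ℝ)) l := by
    have h := Stmt13Aux.greedy_go E v hv L ∅ hndL (by simp) hsortL
    rw [PB.greedyAV, PB.greedyFold, hLdef, h]
    simp
    rfl
  rw [hmes, hgre]
end

section
/- Let u_1, …, u_n be positive integers, set T = 3·(u_1 + … + u_n), and let t and k be integers with 0 < t ≤ u_1 + … + u_n and 1 ≤ k ≤ n. Let E be the PB instance with 6k+1 voters and projects C = {x_1,…,x_n} ∪ {y_1,…,y_{2k+1}} ∪ {d_1,…,d_{k+1}} ∪ {p}, costs cost(x_i) = T + u_i, cost(y_j) = T, cost(d_j) = T − t + 1, cost(p) = T − t, where each x_i is approved by exactly 6k voters, each y_j by exactly 4k voters, each d_j by exactly 2k voters, and p by no voter; the budget is B = (k+1)T, and GreedyAV is run with cheaper-first tie-breaking (with an arbitrary fixed residual order). Then there exists a set F of at most k approval flips with p ∈ GreedyAV(E_F) if and only if there exists S ⊆ {1,…,n} with |S| = k and Σ_{i∈S} u_i = t. -/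
/-! Statement 15: the W[1]-hardness reduction for GreedyAV with cheaper-first
tie-breaking and `6k + 1` voters (Theorem `greedy-av-pb-voters-xp`). -/

/-- The projects: `x_1, …, x_n`, `y_1, …, y_{2k+1}`, `d_1, …, d_{k+1}`, `p`. -/
abbrev Proj (n k : ℕ) := (Fin n ⊕ Fin (2 * k + 1)) ⊕ (Fin (k + 1) ⊕ Unit)

/-- The preferred project `p`. -/
def pProj (n k : ℕ) : Proj n k := Sum.inr (Sum.inr ())

/-- The costs: `cost(x_i) = T + u_i`, `cost(y_j) = T`, `cost(d_j) = T - t + 1`,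
`cost(p) = T - t`, where `T = 3·(u_1 + … + u_n)`. -/
def cost0 {n : ℕ} (u : Fin n → ℕ) (t k : ℕ) : Proj n k → ℕ
  | .inl (.inl i) => 3 * (∑ j, u j) + u i
  | .inl (.inr _) => 3 * (∑ j, u j)
  | .inr (.inl _) => 3 * (∑ j, u j) - t + 1
  | .inr (.inr _) => 3 * (∑ j, u j) - t


section ListHelpers
variable {α : Type*}

/-- A rank-monotone list splits into the low-rank block followed by the high-rank block. -/
theorem rank_split (rank : α → ℕ) (m : ℕ) :
    ∀ (l : List α), l.Pairwise (fun a b => rank a ≤ rank b) →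
      l = l.filter (fun a => decide (rank a < m)) ++ l.filter (fun a => decide (m ≤ rank a))
  | [], _ => rfl
  | a :: l, h => by
    rcases List.pairwise_cons.1 h with ⟨ha, hl⟩
    by_cases hm : rank a < m
    · have hm' : ¬ m ≤ rank a := Nat.not_le.2 hm
      simp only [List.filter_cons, decide_eq_true_eq, hm, hm', if_true, if_false]
      simpa using congrArg (a :: ·) (rank_split rank m l hl)
    · have h1 : ∀ b ∈ l, m ≤ rank b := fun b hb => le_trans (Nat.not_lt.1 hm) (ha b hb)
      have h2 : l.filter (fun a => decide (rank a < m)) = [] := by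
        rw [List.filter_eq_nil_iff]; intro b hb; simpa using Nat.not_lt.2 (h1 b hb)
      have h3 : l.filter (fun a => decide (m ≤ rank a)) = l := by
        rw [List.filter_eq_self]; intro b hb; simpa using h1 b hb
      simp [List.filter_cons, hm, Nat.not_lt.1 hm, h2, h3]

theorem nodup_all_eq {p : α} : ∀ (l : List α), l.Nodup → (∀ a ∈ l, a = p) → p ∈ l → l = [p]
  | [], _, _, hp => by simp at hp
  | a :: l, hnd, hall, _ => by
    have ha : a = p := hall a (by simp)
    subst ha
    have : l = [] := by
      cases l with
      | nil => rfl
      | cons b l' =>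
        exfalso
        have hb : b = a := hall b (by simp)
        simp [hb] at hnd
    simp [this]

theorem foldl_no_change {C : Type*} [DecidableEq C] (cost : C → ℕ) (B : ℕ) :
    ∀ (l : List C) (W : Finset C), (∀ c ∈ l, ¬((∑ x ∈ W, cost x) + cost c ≤ B)) →
      l.foldl (fun W c => if (∑ x ∈ W, cost x) + cost c ≤ B then insert c W else W) W = W
  | [], _, _ => rfl
  | c :: l, W, h => by
    have hc := h c (by simp)
    simp only [List.foldl_cons, if_neg hc]
    exact foldl_no_change cost B l W (fun c' hc' => h c' (by simp [hc']))

theorem blocks_upto {α : Type*} (rank : α → ℕ) :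
    ∀ (m : ℕ) (l : List α), l.Pairwise (fun a b => rank a ≤ rank b) →
      (∀ a ∈ l, rank a < m) →
      l = (List.range m).flatMap (fun j => l.filter (fun a => decide (rank a = j)))
  | 0, l, _, hb => by
    have : l = [] := by
      cases l with
      | nil => rfl
      | cons a l' => exact absurd (hb a (by simp)) (by omega)
    simp [this]
  | m + 1, l, h, hb => by
    have hpf : (l.filter (fun a => decide (rank a < m))).Pairwise
        (fun a b => rank a ≤ rank b) := List.Pairwise.sublist (List.filter_sublist (l := l)) h
    have hbf : ∀ a ∈ l.filter (fun a => decide (rank a < m)), rank a < m := by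
      intro a ha
      simpa using (List.mem_filter.1 ha).2
    have IH := blocks_upto rank m _ hpf hbf
    have hIH2 : l.filter (fun a => decide (rank a < m))
        = (List.range m).flatMap (fun j => l.filter (fun a => decide (rank a = j))) := by
      rw [IH, List.flatMap_def, List.flatMap_def]
      congr 1
      apply List.map_congr_left
      intro j hj
      rw [List.filter_filter]
      apply List.filter_congr
      intro a _
      by_cases h1 : rank a = j
      · simp only [h1, decide_eq_true_eq]
        have : j < m := List.mem_range.1 hj
        simp [this]
      · simp [h1]
    have hlast : l.filter (fun a => decide (m ≤ rank a))
        = l.filter (fun a => decide (rank a = m)) := by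
      apply List.filter_congr
      intro a ha
      have := hb a ha
      by_cases h1 : rank a = m
      · simp [h1]
      · have h2 : ¬ (m ≤ rank a) := by omega
        simp [h1, h2]
    rw [List.range_succ, List.flatMap_append, List.flatMap_singleton, ← hIH2, ← hlast]
    exact rank_split rank m l h

end ListHelpers

set_option linter.unusedSectionVars false
section FlipScore
variable {C V : Type} [Fintype C] [DecidableEq C] [Fintype V] [DecidableEq V]

/-- number of flips touching project `c` -/
def mcount (F : Finset (V × C)) (c : C) : ℕ := (F.filter fun q => q.2 = c).card

theorem mem_flip_iff (E : PB C V) (F : Finset (V × C)) (v : V) (c : C) :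
    c ∈ (E.flip F).A v ↔ ((c ∈ E.A v ∧ (v, c) ∉ F) ∨ ((v, c) ∈ F ∧ c ∉ E.A v)) := by
  have himg : c ∈ (F.filter fun q => q.1 = v).image Prod.snd ↔ (v, c) ∈ F := by
    constructor
    · intro h
      obtain ⟨⟨v', c'⟩, hq, rfl⟩ := Finset.mem_image.1 h
      obtain ⟨hF, hv⟩ := Finset.mem_filter.1 hq
      have hv' : v' = v := hv
      subst hv'
      exact hF
    · intro h
      exact Finset.mem_image.2 ⟨(v, c), Finset.mem_filter.2 ⟨h, rfl⟩, rfl⟩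
  show c ∈ symmDiff (E.A v) _ ↔ _
  rw [Finset.mem_symmDiff, himg]

theorem mcount_card (F : Finset (V × C)) (c : C) :
    (Finset.univ.filter fun v : V => (v, c) ∈ F).card = mcount F c := by
  apply Finset.card_bij (fun v _ => (v, c))
  · intro v hv
    exact Finset.mem_filter.2 ⟨(Finset.mem_filter.1 hv).2, rfl⟩
  · intro v _ v' _ h
    exact congrArg Prod.fst h
  · rintro ⟨v', c'⟩ hq
    obtain ⟨hF, hc⟩ := Finset.mem_filter.1 hq
    subst hc
    exact ⟨v', Finset.mem_filter.2 ⟨Finset.mem_univ _, hF⟩, rfl⟩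

theorem flip_score_le (E : PB C V) (F : Finset (V × C)) (c : C) :
    (E.flip F).score c ≤ E.score c + mcount F c := by
  rw [← mcount_card]
  unfold PB.score
  refine le_trans (Finset.card_le_card ?_) (Finset.card_union_le _ _)
  intro v hv
  obtain ⟨-, hm⟩ := Finset.mem_filter.1 hv
  rw [mem_flip_iff] at hm
  rcases hm with ⟨h1, -⟩ | ⟨h1, -⟩
  · exact Finset.mem_union_left _ (Finset.mem_filter.2 ⟨Finset.mem_univ _, h1⟩)
  · exact Finset.mem_union_right _ (Finset.mem_filter.2 ⟨Finset.mem_univ _, h1⟩)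

theorem score_le_flip (E : PB C V) (F : Finset (V × C)) (c : C) :
    E.score c ≤ (E.flip F).score c + mcount F c := by
  rw [← mcount_card]
  unfold PB.score
  refine le_trans (Finset.card_le_card ?_) (Finset.card_union_le _ _)
  intro v hv
  obtain ⟨-, hm⟩ := Finset.mem_filter.1 hv
  by_cases hF : (v, c) ∈ F
  · exact Finset.mem_union_right _ (Finset.mem_filter.2 ⟨Finset.mem_univ _, hF⟩)
  · refine Finset.mem_union_left _ (Finset.mem_filter.2 ⟨Finset.mem_univ _, ?_⟩)
    rw [mem_flip_iff]
    exact Or.inl ⟨hm, hF⟩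

theorem mcount_sum (F : Finset (V × C)) : ∑ c : C, mcount F c = F.card := by
  symm
  exact Finset.card_eq_sum_card_fiberwise (fun q _ => Finset.mem_univ q.2)

theorem mcount_pair_le (F : Finset (V × C)) {c c' : C} (h : c ≠ c') :
    mcount F c + mcount F c' ≤ F.card := by
  rw [← mcount_sum (F := F)]
  calc mcount F c + mcount F c' = ∑ x ∈ ({c, c'} : Finset C), mcount F x := by
        rw [Finset.sum_pair h]
    _ ≤ ∑ x : C, mcount F x :=
        Finset.sum_le_sum_of_subset (Finset.subset_univ _)

/-- Transitivity and totality of the GreedyAV comparison relation for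
cheaper-first tie-breaking. -/
theorem cf_total (cost : C → ℕ) (prec0 : C → C → Bool)
    (hlin : IsStrictTotalOrder C fun a b => prec0 a b = true) (a b : C) (h : a ≠ b) :
    PB.cheaperFirst cost prec0 a b = true ∨ PB.cheaperFirst cost prec0 b a = true := by
  unfold PB.cheaperFirst
  simp only [Bool.or_eq_true, Bool.and_eq_true, decide_eq_true_eq]
  rcases lt_trichotomy (cost a) (cost b) with hc | hc | hc
  · exact Or.inl (Or.inl hc)
  · rcases (haveI := hlin; trichotomous_of (fun a b : C => prec0 a b = true) a b) with hp | hp | hp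
    · exact Or.inl (Or.inr ⟨hc, hp⟩)
    · exact absurd hp h
    · exact Or.inr (Or.inr ⟨hc.symm, hp⟩)
  · exact Or.inr (Or.inl hc)

theorem cf_trans (cost : C → ℕ) (prec0 : C → C → Bool)
    (hlin : IsStrictTotalOrder C fun a b => prec0 a b = true) (a b c : C)
    (hab : PB.cheaperFirst cost prec0 a b = true)
    (hbc : PB.cheaperFirst cost prec0 b c = true) :
    PB.cheaperFirst cost prec0 a c = true := by
  unfold PB.cheaperFirst at *
  simp only [Bool.or_eq_true, Bool.and_eq_true, decide_eq_true_eq] at *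
  rcases hab with h1 | ⟨h1, h2⟩ <;> rcases hbc with h3 | ⟨h3, h4⟩
  · exact Or.inl (by omega)
  · exact Or.inl (by omega)
  · exact Or.inl (by omega)
  · exact Or.inr ⟨by omega, hlin.trans _ _ _ h2 h4⟩

theorem consOrderAV_sorted (E : PB C V) (cost : C → ℕ) (prec0 : C → C → Bool)
    (hlin : IsStrictTotalOrder C fun a b => prec0 a b = true) :
    (PB.consOrderAV E (PB.cheaperFirst cost prec0)).Pairwise
      (fun c c' => E.score c' < E.score c ∨
        (E.score c = E.score c' ∧ (PB.cheaperFirst cost prec0 c c' = true ∨ c = c'))) := by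
  unfold PB.consOrderAV
  have h := List.pairwise_mergeSort
    (le := fun c c' : C => decide (E.score c' < E.score c) ||
      (decide (E.score c = E.score c') && (PB.cheaperFirst cost prec0 c c' || decide (c = c'))))
    ?_ ?_ (Finset.univ : Finset C).toList
  · refine h.imp ?_
    intro a b hab
    simpa only [Bool.or_eq_true, Bool.and_eq_true, decide_eq_true_eq] using hab
  · intro a b c hab hbc
    simp only [Bool.or_eq_true, Bool.and_eq_true, decide_eq_true_eq] at *
    rcases hab with h1 | ⟨h1, h2⟩ <;> rcases hbc with h3 | ⟨h3, h4⟩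
    · exact Or.inl (by omega)
    · exact Or.inl (by omega)
    · exact Or.inl (by omega)
    · refine Or.inr ⟨by omega, ?_⟩
      rcases h2 with h2 | rfl
      · rcases h4 with h4 | rfl
        · exact Or.inl (cf_trans cost prec0 hlin _ _ _ h2 h4)
        · exact Or.inl h2
      · exact h4
  · intro a b
    simp only [Bool.or_eq_true, Bool.and_eq_true, decide_eq_true_eq]
    by_cases hab : a = b
    · subst hab
      rcases Nat.lt_trichotomy (E.score a) (E.score a) with h | h | h
      · exact Or.inl (Or.inl h)
      · exact Or.inl (Or.inr ⟨rfl, Or.inr rfl⟩)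
      · exact Or.inl (Or.inl h)
    · rcases Nat.lt_trichotomy (E.score a) (E.score b) with h | h | h
      · exact Or.inr (Or.inl h)
      · rcases cf_total cost prec0 hlin a b hab with hp | hp
        · exact Or.inl (Or.inr ⟨h, Or.inl hp⟩)
        · exact Or.inr (Or.inr ⟨h.symm, Or.inl hp⟩)
      · exact Or.inl (Or.inl h)

theorem noflip_score (E : PB C V) (F : Finset (V × C)) (c : C)
    (h : ∀ v, (v, c) ∉ F) : (E.flip F).score c = E.score c := by
  unfold PB.score
  congr 1
  apply Finset.filter_congr
  intro v _
  simp [mem_flip_iff, h v]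

theorem flip_score_insert (E : PB C V) (F : Finset (V × C)) (c : C) (v0 : V)
    (hv0 : c ∉ E.A v0) (hF : ∀ v, (v, c) ∈ F ↔ v = v0) :
    (E.flip F).score c = E.score c + 1 := by
  unfold PB.score
  have hns : v0 ∉ Finset.univ.filter (fun v => c ∈ E.A v) := by simp [hv0]
  have hins : Finset.univ.filter (fun v => c ∈ (E.flip F).A v)
      = insert v0 (Finset.univ.filter fun v => c ∈ E.A v) := by
    ext v
    simp only [Finset.mem_filter, Finset.mem_univ, true_and, Finset.mem_insert, mem_flip_iff, hF]
    by_cases hv : v = v0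
    · subst hv; simp [hv0]
    · simp [hv]
  rw [hins, Finset.card_insert_of_notMem hns]

end FlipScore

section Inst

variable {n k t : ℕ} {u : Fin n → ℕ}

def ixp (n k : ℕ) (i : Fin n) : Proj n k := Sum.inl (Sum.inl i)

theorem ixp_inj : Function.Injective (ixp n k) := by
  intro i j h
  simpa [ixp] using h

theorem sum_cost_image (u : Fin n → ℕ) (t k : ℕ) (S : Finset (Fin n)) :
    ∑ c ∈ S.image (ixp n k), cost0 u t k c
      = S.card * (3 * ∑ j, u j) + ∑ i ∈ S, u i := by
  rw [Finset.sum_image (fun x _ y _ h => ixp_inj h)]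
  simp only [ixp, cost0, Finset.sum_add_distrib, Finset.sum_const, smul_eq_mul]

theorem foldX (hu : ∀ i, 0 < u i) (hk : 1 ≤ k) :
    ∀ (l : List (Proj n k)), (∀ c ∈ l, ∃ i, c = ixp n k i) → l.Nodup →
    ∀ S : Finset (Fin n), (∀ i ∈ S, ixp n k i ∉ l) → S.card ≤ k → k ≤ S.card + l.length →
    ∃ S' : Finset (Fin n),
      l.foldl (fun W c => if (∑ x ∈ W, cost0 u t k x) + cost0 u t k c ≤ (k+1) * (3 * ∑ j, u j)
          then insert c W else W) (S.image (ixp n k)) = S'.image (ixp n k)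
        ∧ S'.card = k ∧ ∀ i ∈ S', i ∈ S ∨ ixp n k i ∈ l
  | [], _, _, S, _, hSk, hlen => by
    refine ⟨S, rfl, le_antisymm hSk (by simpa using hlen), fun i hi => Or.inl hi⟩
  | c :: l, hall, hnd, S, hdisj, hSk, hlen => by
    obtain ⟨i, rfl⟩ := hall c (by simp)
    have hnd' : l.Nodup := (List.nodup_cons.1 hnd).2
    have hhead : ixp n k i ∉ l := (List.nodup_cons.1 hnd).1
    have hiS : i ∉ S := fun h => hdisj i h (by simp)
    have hσU : ∀ S' : Finset (Fin n), ∑ i ∈ S', u i ≤ ∑ j, u j :=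
      fun S' => Finset.sum_le_sum_of_subset (Finset.subset_univ S')
    rcases lt_or_eq_of_le hSk with hlt | heq
    · -- S.card < k : the project fits
      have hfit : (∑ x ∈ S.image (ixp n k), cost0 u t k x) + cost0 u t k (ixp n k i)
          ≤ (k+1) * (3 * ∑ j, u j) := by
        rw [sum_cost_image]
        show S.card * (3 * ∑ j, u j) + ∑ i ∈ S, u i + (3 * (∑ j, u j) + u i) ≤ _
        have h1 : (∑ j ∈ S, u j) + u i ≤ ∑ j, u j := by
          have := hσU (insert i S)
          rwa [Finset.sum_insert hiS, add_comm (u i)] at this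
        have h2 : (S.card + 1) * (3 * ∑ j, u j) ≤ k * (3 * ∑ j, u j) :=
          Nat.mul_le_mul_right _ hlt
        generalize hA : (∑ j ∈ S, u j) = A at *
        generalize hU : (∑ j : Fin n, u j) = U at *
        generalize hc : S.card = cS at *
        nlinarith [h1, h2]
      simp only [List.foldl_cons, if_pos hfit, ← Finset.image_insert]
      obtain ⟨S', h1, h2, h3⟩ := foldX hu hk l (fun c hc => hall c (by simp [hc])) hnd'
        (insert i S)
        (fun j hj => by
          rcases Finset.mem_insert.1 hj with rfl | hj
          · exact hhead
          · exact fun h => hdisj j hj (by simp [h]))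
        (by rw [Finset.card_insert_of_notMem hiS]; omega)
        (by rw [Finset.card_insert_of_notMem hiS]; simp at hlen ⊢; omega)
      refine ⟨S', h1, h2, fun j hj => ?_⟩
      rcases h3 j hj with hj' | hj'
      · rcases Finset.mem_insert.1 hj' with rfl | h
        · exact Or.inr (by simp)
        · exact Or.inl h
      · exact Or.inr (by simp [hj'])
    · -- S.card = k : nothing more fits, ever
      have hnofit : ∀ c' ∈ ixp n k i :: l,
          ¬((∑ x ∈ S.image (ixp n k), cost0 u t k x) + cost0 u t k c'
            ≤ (k+1) * (3 * ∑ j, u j)) := by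
        intro c' hc'
        obtain ⟨j, rfl⟩ := hall c' hc'
        rw [sum_cost_image]
        show ¬ (S.card * (3 * ∑ j, u j) + ∑ i ∈ S, u i + (3 * (∑ j, u j) + u j) ≤ _)
        rw [heq]
        have h3 := hu j
        generalize hA : (∑ j ∈ S, u j) = A at *
        generalize hU : (∑ j : Fin n, u j) = U at *
        nlinarith [h3]
      have := foldl_no_change (cost0 u t k) ((k+1) * (3 * ∑ j, u j))
        (ixp n k i :: l) (S.image (ixp n k)) hnofit
      refine ⟨S, by rw [this], heq, fun i hi => Or.inl hi⟩

theorem pp_not_mem_imageX (S : Finset (Fin n)) : pProj n k ∉ S.image (ixp n k) := by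
  simp only [Finset.mem_image, not_exists]
  rintro i ⟨-, h⟩
  simp [ixp, pProj] at h

theorem greedy_main (hu : ∀ i, 0 < u i) (ht : 0 < t) (htsum : t ≤ ∑ j, u j)
    (hk : 1 ≤ k) (hkn : k ≤ n)
    (L Bx By Bd : List (Proj n k))
    (hnd : L.Nodup)
    (hL : L = Bx ++ (By ++ (Bd ++ [pProj n k])))
    (hBxmem : ∀ c ∈ Bx, ∃ i, c = ixp n k i)
    (hBxall : ∀ i, ixp n k i ∈ Bx)
    (hBymem : ∀ c ∈ By, ∃ j : Fin (2 * k + 1), c = (Sum.inl (Sum.inr j) : Proj n k))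
    (hBdmem : ∀ c ∈ Bd, ∃ j : Fin (k + 1), c = (Sum.inr (Sum.inl j) : Proj n k))
    (hBdne : Bd ≠ []) :
    ∃ S' : Finset (Fin n), S'.card = k ∧
      Bx.foldl (fun W c => if (∑ x ∈ W, cost0 u t k x) + cost0 u t k c ≤ (k+1) * (3 * ∑ j, u j)
          then insert c W else W) ∅ = S'.image (ixp n k) ∧
      (pProj n k ∈ L.foldl (fun W c => if (∑ x ∈ W, cost0 u t k x) + cost0 u t k c ≤ (k+1) * (3 * ∑ j, u j)
          then insert c W else W) ∅ ↔ ∑ i ∈ S', u i = t) := by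
  have hBxsub : Bx.Sublist L := hL ▸ List.sublist_append_left _ _
  have hBxnd : Bx.Nodup := hBxsub.nodup hnd
  have hBxlen : k ≤ Bx.length := by
    have h1 : (Finset.univ.image (ixp n k) : Finset (Proj n k)) ⊆ Bx.toFinset := by
      intro c hc
      obtain ⟨i, -, rfl⟩ := Finset.mem_image.1 hc
      exact List.mem_toFinset.2 (hBxall i)
    have h2 := Finset.card_le_card h1
    rw [Finset.card_image_of_injective _ ixp_inj, Finset.card_univ, Fintype.card_fin,
      List.toFinset_card_of_nodup hBxnd] at h2
    omega
  obtain ⟨S', hfold, hcard, -⟩ := foldX (t := t) hu hk Bx hBxmem hBxnd ∅ (by simp) (by simp)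
    (by simpa using hBxlen)
  rw [Finset.image_empty] at hfold
  refine ⟨S', hcard, hfold, ?_⟩
  -- notation
  set U := ∑ j : Fin n, u j with hU
  have htU : t ≤ U := htsum
  have hUpos : 0 < U := lt_of_lt_of_le ht htU
  obtain ⟨D, hD⟩ : ∃ D, 3 * U - t = D ∧ D + t = 3 * U := ⟨3 * U - t, rfl, by omega⟩
  obtain ⟨hD1, hD2⟩ := hD
  set σ := ∑ i ∈ S', u i with hσ
  have hσk : k ≤ σ := by
    have := Finset.card_nsmul_le_sum S' u 1 (fun i _ => hu i)
    simpa [hcard] using this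
  have hσU : σ ≤ U := Finset.sum_le_sum_of_subset (Finset.subset_univ S')
  have hcost : (∑ x ∈ S'.image (ixp n k), cost0 u t k x) = k * (3 * U) + σ := by
    rw [sum_cost_image, hcard]
  have hBud : (k + 1) * (3 * U) = k * (3 * U) + (D + t) := by rw [hD2]; ring
  rw [hL, List.foldl_append, List.foldl_append, List.foldl_append, hfold]
  -- y phase
  have hyphase : By.foldl (fun W c => if (∑ x ∈ W, cost0 u t k x) + cost0 u t k c ≤ (k+1) * (3 * U)
      then insert c W else W) (S'.image (ixp n k)) = S'.image (ixp n k) := by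
    apply foldl_no_change
    intro c hc
    obtain ⟨j, rfl⟩ := hBymem c hc
    rw [hcost]
    show ¬(k * (3 * U) + σ + (3 * U) ≤ (k + 1) * (3 * U))
    rw [hBud]
    have : t ≤ 3 * U := by omega
    intro hcon
    have : σ + 3 * U ≤ D + t := by linarith
    omega
  rw [hyphase]
  by_cases hcase : t ≤ σ
  · -- no d fits
    have hdphase : Bd.foldl (fun W c => if (∑ x ∈ W, cost0 u t k x) + cost0 u t k c ≤ (k+1) * (3 * U)
        then insert c W else W) (S'.image (ixp n k)) = S'.image (ixp n k) := by
      apply foldl_no_change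
      intro c hc
      obtain ⟨j, rfl⟩ := hBdmem c hc
      rw [hcost]
      show ¬(k * (3 * U) + σ + (3 * U - t + 1) ≤ (k + 1) * (3 * U))
      rw [hBud, hD1]
      intro hcon
      have : σ + (D + 1) ≤ D + t := by linarith
      omega
    rw [hdphase]
    simp only [List.foldl_cons, List.foldl_nil]
    show pProj n k ∈ (if (∑ x ∈ S'.image (ixp n k), cost0 u t k x) + cost0 u t k (pProj n k)
        ≤ (k + 1) * (3 * U) then insert (pProj n k) (S'.image (ixp n k)) else S'.image (ixp n k)) ↔ σ = t
    have hcostp : cost0 u t k (pProj n k) = D := hD1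
    rw [hcost, hcostp, hBud]
    by_cases hσt : σ = t
    · rw [if_pos (by omega)]
      simp [Finset.mem_insert, hσt]
    · rw [if_neg (by omega)]
      simp only [pp_not_mem_imageX, false_iff]
      exact hσt
  · -- σ < t : first d is added, then nothing else fits
    push_neg at hcase
    obtain ⟨d0, Bd', rfl⟩ : ∃ d0 Bd', Bd = d0 :: Bd' := by
      cases Bd with
      | nil => exact absurd rfl hBdne
      | cons a l => exact ⟨a, l, rfl⟩
    obtain ⟨j0, rfl⟩ := hBdmem d0 (by simp)
    have hd0cost : cost0 u t k (Sum.inr (Sum.inl j0) : Proj n k) = D + 1 := by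
      show 3 * U - t + 1 = D + 1; omega
    have hd0fit : (∑ x ∈ S'.image (ixp n k), cost0 u t k x)
        + cost0 u t k (Sum.inr (Sum.inl j0) : Proj n k) ≤ (k + 1) * (3 * U) := by
      rw [hcost, hd0cost, hBud]; omega
    simp only [List.foldl_cons, if_pos hd0fit]
    have hd0notmem : (Sum.inr (Sum.inl j0) : Proj n k) ∉ S'.image (ixp n k) := by
      simp only [Finset.mem_image, not_exists]
      rintro i ⟨-, h⟩
      simp [ixp] at h
    have hcost1 : (∑ x ∈ insert (Sum.inr (Sum.inl j0) : Proj n k) (S'.image (ixp n k)),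
        cost0 u t k x) = k * (3 * U) + σ + (D + 1) := by
      rw [Finset.sum_insert hd0notmem, hcost, hd0cost]; ring
    have hdphase : Bd'.foldl (fun W c => if (∑ x ∈ W, cost0 u t k x) + cost0 u t k c ≤ (k+1) * (3 * U)
        then insert c W else W)
        (insert (Sum.inr (Sum.inl j0) : Proj n k) (S'.image (ixp n k)))
        = insert (Sum.inr (Sum.inl j0) : Proj n k) (S'.image (ixp n k)) := by
      apply foldl_no_change
      intro c hc
      obtain ⟨j, rfl⟩ := hBdmem c (by simp [hc])
      rw [hcost1]
      show ¬(k * (3 * U) + σ + (D + 1) + (3 * U - t + 1) ≤ (k + 1) * (3 * U))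
      rw [hBud, hD1]
      intro hcon
      have hD2t : 2 * t ≤ D := by omega
      omega
    rw [hdphase]
    simp only [List.foldl_cons, List.foldl_nil]
    rw [if_neg ?hpfail]
    case hpfail =>
      rw [hcost1]
      show ¬(k * (3 * U) + σ + (D + 1) + (3 * U - t) ≤ (k + 1) * (3 * U))
      rw [hBud, hD1]
      intro hcon
      have hD2t : 2 * t ≤ D := by omega
      omega
    constructor
    · intro h
      rcases Finset.mem_insert.1 h with h | h
      · exact absurd h (by simp [pProj])
      · exact absurd h (pp_not_mem_imageX S')
    · intro h
      omega

end Inst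

def rank4 {n k : ℕ} : Proj n k → ℕ
  | .inl (.inl _) => 0
  | .inl (.inr _) => 1
  | .inr (.inl _) => 2
  | .inr (.inr _) => 3

def rank5 {n k : ℕ} (S : Finset (Fin n)) : Proj n k → ℕ
  | .inl (.inl i) => if i ∈ S then 0 else 1
  | .inl (.inr _) => 2
  | .inr (.inl _) => 3
  | .inr (.inr _) => 4

theorem stmt15 (n k t : ℕ) (u : Fin n → ℕ) (hu : ∀ i, 0 < u i)
    (ht : 0 < t) (htsum : t ≤ ∑ i, u i) (hk1 : 1 ≤ k) (hkn : k ≤ n)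
    (A : Fin (6 * k + 1) → Finset (Proj n k))
    (E : PB (Proj n k) (Fin (6 * k + 1)))
    (hE : E = { A := A, budget := (k + 1) * (3 * ∑ i, u i), cost := cost0 u t k })
    (hx : ∀ i : Fin n, E.score (Sum.inl (Sum.inl i)) = 6 * k)
    (hy : ∀ j : Fin (2 * k + 1), E.score (Sum.inl (Sum.inr j)) = 4 * k)
    (hd : ∀ j : Fin (k + 1), E.score (Sum.inr (Sum.inl j)) = 2 * k)
    (hp : E.score (pProj n k) = 0)
    (prec0 : Proj n k → Proj n k → Bool)
    (hlin : IsStrictTotalOrder (Proj n k) fun a b => prec0 a b = true) :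
    (∃ F : Finset (Fin (6 * k + 1) × Proj n k), F.card ≤ k ∧
        pProj n k ∈ PB.greedyAV (E.flip F) (PB.cheaperFirst (cost0 u t k) prec0)) ↔
      ∃ S : Finset (Fin n), S.card = k ∧ ∑ i ∈ S, u i = t := by
  constructor
  · -- forward direction
    rintro ⟨F, hFk, hpmem⟩
    have key : ∀ a b : Proj n k, a ≠ b → E.score b + 2 * k ≤ E.score a →
        (E.flip F).score b < (E.flip F).score a := by
      intro a b hne hsc
      have h1 := score_le_flip E F a
      have h2 := flip_score_le E F b
      have h3 := mcount_pair_le F hne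
      omega
    have hsep : ∀ a b : Proj n k, rank4 a < rank4 b →
        (E.flip F).score b < (E.flip F).score a := by
      intro a b hr
      have hp' : E.score (Sum.inr (Sum.inr ()) : Proj n k) = 0 := hp
      rcases a with (i | j) | (j | a0) <;> rcases b with (i' | j') | (j' | b0) <;>
          simp only [rank4] at hr <;> try omega
      · exact key _ _ (by simp) (by rw [hy j', hx i]; omega)
      · exact key _ _ (by simp) (by rw [hd j', hx i]; omega)
      · cases b0; exact key _ _ (by simp) (by rw [hp', hx i]; omega)
      · exact key _ _ (by simp) (by rw [hd j', hy j]; omega)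
      · cases b0; exact key _ _ (by simp) (by rw [hp', hy j]; omega)
      · cases b0; exact key _ _ (by simp) (by rw [hp', hd j]; omega)
    set L := PB.consOrderAV (E.flip F) (PB.cheaperFirst (cost0 u t k) prec0) with hLdef
    have hsorted := consOrderAV_sorted (E.flip F) (cost0 u t k) prec0 hlin
    have hmono : L.Pairwise (fun a b => rank4 a ≤ rank4 b) := by
      refine hsorted.imp ?_
      intro a b hab
      by_contra hcon
      have hlt := hsep b a (by omega)
      rcases hab with h | ⟨h, -⟩ <;> omega
    have hperm : L.Perm (Finset.univ : Finset (Proj n k)).toList :=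
      List.mergeSort_perm _ _
    have hndL : L.Nodup := hperm.nodup_iff.2 (Finset.nodup_toList _)
    have hmemL : ∀ c : Proj n k, c ∈ L := fun c => hperm.mem_iff.2 (by simp)
    have hblocks := blocks_upto rank4 4 L hmono
      (by intro a _; rcases a with (i | j) | (j | a0) <;> simp [rank4])
    rw [show List.range 4 = [0, 1, 2, 3] from rfl] at hblocks
    simp only [List.flatMap_cons, List.flatMap_nil, List.append_nil] at hblocks
    have hB3 : L.filter (fun a => decide (rank4 a = 3)) = [pProj n k] := by
      refine nodup_all_eq _ (List.Nodup.sublist (List.filter_sublist (l := L)) hndL) ?_ ?_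
      · intro a ha
        have h2 := of_decide_eq_true (List.mem_filter.1 ha).2
        rcases a with (i | j) | (j | a0)
        · simp [rank4] at h2
        · simp [rank4] at h2
        · simp [rank4] at h2
        · cases a0; rfl
      · exact List.mem_filter.2 ⟨hmemL _, by simp [pProj, rank4]⟩
    rw [hB3] at hblocks
    obtain ⟨S', hScard', -, hiff⟩ := greedy_main hu ht htsum hk1 hkn L
      (L.filter (fun a => decide (rank4 a = 0)))
      (L.filter (fun a => decide (rank4 a = 1)))
      (L.filter (fun a => decide (rank4 a = 2)))
      hndL hblocks
      (by
        intro c hc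
        have h2 := of_decide_eq_true (List.mem_filter.1 hc).2
        rcases c with (i | j) | (j | c0)
        · exact ⟨i, rfl⟩
        · simp [rank4] at h2
        · simp [rank4] at h2
        · simp [rank4] at h2)
      (fun i => List.mem_filter.2 ⟨hmemL _, by simp [ixp, rank4]⟩)
      (by
        intro c hc
        have h2 := of_decide_eq_true (List.mem_filter.1 hc).2
        rcases c with (i | j) | (j | c0)
        · simp [rank4] at h2
        · exact ⟨j, rfl⟩
        · simp [rank4] at h2
        · simp [rank4] at h2)
      (by
        intro c hc
        have h2 := of_decide_eq_true (List.mem_filter.1 hc).2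
        rcases c with (i | j) | (j | c0)
        · simp [rank4] at h2
        · simp [rank4] at h2
        · exact ⟨j, rfl⟩
        · simp [rank4] at h2)
      (by
        have hmem : (Sum.inr (Sum.inl (⟨0, by omega⟩ : Fin (k+1))) : Proj n k)
            ∈ L.filter (fun a => decide (rank4 a = 2)) :=
          List.mem_filter.2 ⟨hmemL _, by simp [rank4]⟩
        exact List.ne_nil_of_mem hmem)
    have hb : (E.flip F).budget = (k + 1) * (3 * ∑ i, u i) := by rw [hE]; rfl
    have hc : (E.flip F).cost = cost0 u t k := by rw [hE]; rfl
    have hrun : PB.greedyAV (E.flip F) (PB.cheaperFirst (cost0 u t k) prec0)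
        = L.foldl (fun W c => if (∑ x ∈ W, cost0 u t k x) + cost0 u t k c
            ≤ (k+1) * (3 * ∑ j, u j) then insert c W else W) ∅ := by
      unfold PB.greedyAV PB.greedyFold
      rw [hb, hc]
    rw [hrun] at hpmem
    exact ⟨S', hScard', hiff.1 hpmem⟩
  · -- backward direction
    rintro ⟨S, hScard, hSsum⟩
    have hvot : ∀ i : Fin n, ∃ v, (Sum.inl (Sum.inl i) : Proj n k) ∉ E.A v := by
      intro i
      by_contra hcon
      push_neg at hcon
      have heq : (Finset.univ.filter fun v => (Sum.inl (Sum.inl i) : Proj n k) ∈ E.A v)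
          = Finset.univ := Finset.filter_true_of_mem (fun v _ => hcon v)
      have h6 := hx i
      unfold PB.score at h6
      rw [heq, Finset.card_univ, Fintype.card_fin] at h6
      omega
    choose w hw using hvot
    refine ⟨S.image (fun i => (w i, (Sum.inl (Sum.inl i) : Proj n k))), ?_, ?_⟩
    · exact le_trans Finset.card_image_le (le_of_eq hScard)
    set F := S.image (fun i => (w i, (Sum.inl (Sum.inl i) : Proj n k))) with hFdef
    have hFmem : ∀ (v : Fin (6 * k + 1)) (c : Proj n k),
        (v, c) ∈ F ↔ ∃ i ∈ S, w i = v ∧ (Sum.inl (Sum.inl i) : Proj n k) = c := by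
      intro v c
      rw [hFdef]
      simp [Finset.mem_image, Prod.ext_iff]
    have hsx1 : ∀ i ∈ S, (E.flip F).score (Sum.inl (Sum.inl i)) = 6 * k + 1 := by
      intro i hi
      rw [flip_score_insert E F _ (w i) (hw i) ?_, hx i]
      intro v
      rw [hFmem]
      constructor
      · rintro ⟨j, hjS, hjv, hjc⟩
        have hji : j = i := by simpa using hjc
        subst hji
        exact hjv.symm
      · rintro rfl
        exact ⟨i, hi, rfl, rfl⟩
    have hnoflip : ∀ c : Proj n k, (∀ i ∈ S, (Sum.inl (Sum.inl i) : Proj n k) ≠ c) →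
        (E.flip F).score c = E.score c := by
      intro c hc
      apply noflip_score
      intro v hv
      rw [hFmem] at hv
      obtain ⟨j, hjS, -, hjc⟩ := hv
      exact hc j hjS hjc
    have hsx0 : ∀ i ∉ S, (E.flip F).score (Sum.inl (Sum.inl i)) = 6 * k := by
      intro i hi
      rw [hnoflip _ ?_, hx i]
      intro j hj hne
      have hji : j = i := by simpa using hne
      subst hji
      exact hi hj
    have hscore : ∀ c : Proj n k, (E.flip F).score c =
        (if rank5 S c = 0 then 6 * k + 1 else if rank5 S c = 1 then 6 * k
          else if rank5 S c = 2 then 4 * k else if rank5 S c = 3 then 2 * k else 0) := by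
      intro c
      rcases c with (i | j) | (j | c0)
      · by_cases hi : i ∈ S
        · simp [rank5, hi, hsx1 i hi]
        · simp [rank5, hi, hsx0 i hi]
      · rw [hnoflip _ (by intro i _ hne; simp at hne), hy j]
        simp [rank5]
      · rw [hnoflip _ (by intro i _ hne; simp at hne), hd j]
        simp [rank5]
      · cases c0
        have hp' : E.score (Sum.inr (Sum.inr ()) : Proj n k) = 0 := hp
        rw [hnoflip _ (by intro i _ hne; simp at hne), hp']
        simp [rank5]
    have hsep : ∀ a b : Proj n k, rank5 S a < rank5 S b →
        (E.flip F).score b < (E.flip F).score a := by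
      intro a b hr
      have hb4 : ∀ c : Proj n k, rank5 S c ≤ 4 := by
        intro c
        rcases c with (i | j) | (j | c0) <;> simp only [rank5] <;> try omega
        split_ifs <;> omega
      have h4a := hb4 a
      have h4b := hb4 b
      rw [hscore a, hscore b]
      split_ifs <;> omega
    set L := PB.consOrderAV (E.flip F) (PB.cheaperFirst (cost0 u t k) prec0) with hLdef
    have hsorted := consOrderAV_sorted (E.flip F) (cost0 u t k) prec0 hlin
    have hmono : L.Pairwise (fun a b => rank5 S a ≤ rank5 S b) := by
      refine hsorted.imp ?_
      intro a b hab
      by_contra hcon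
      have hlt := hsep b a (by omega)
      rcases hab with h | ⟨h, -⟩ <;> omega
    have hperm : L.Perm (Finset.univ : Finset (Proj n k)).toList :=
      List.mergeSort_perm _ _
    have hndL : L.Nodup := hperm.nodup_iff.2 (Finset.nodup_toList _)
    have hmemL : ∀ c : Proj n k, c ∈ L := fun c => hperm.mem_iff.2 (by simp)
    have hblocks := blocks_upto (rank5 S) 5 L hmono
      (by
        intro a _
        rcases a with (i | j) | (j | a0) <;> simp only [rank5] <;> try omega
        split_ifs <;> omega)
    rw [show List.range 5 = [0, 1, 2, 3, 4] from rfl] at hblocks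
    simp only [List.flatMap_cons, List.flatMap_nil, List.append_nil] at hblocks
    have hB4 : L.filter (fun a => decide (rank5 S a = 4)) = [pProj n k] := by
      refine nodup_all_eq _ (List.Nodup.sublist (List.filter_sublist (l := L)) hndL) ?_ ?_
      · intro a ha
        have h2 := of_decide_eq_true (List.mem_filter.1 ha).2
        rcases a with (i | j) | (j | a0)
        · simp only [rank5] at h2; split_ifs at h2 <;> omega
        · simp [rank5] at h2
        · simp [rank5] at h2
        · cases a0; rfl
      · exact List.mem_filter.2 ⟨hmemL _, by simp [pProj, rank5]⟩
    rw [hB4] at hblocks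
    have hL' : L = (L.filter (fun a => decide (rank5 S a = 0))
          ++ L.filter (fun a => decide (rank5 S a = 1)))
        ++ (L.filter (fun a => decide (rank5 S a = 2))
          ++ (L.filter (fun a => decide (rank5 S a = 3)) ++ [pProj n k])) := by
      conv_lhs => rw [hblocks]
      rw [List.append_assoc]
    obtain ⟨S'', hScard'', hfoldBx, hiff⟩ := greedy_main hu ht htsum hk1 hkn L
      (L.filter (fun a => decide (rank5 S a = 0)) ++ L.filter (fun a => decide (rank5 S a = 1)))
      (L.filter (fun a => decide (rank5 S a = 2)))
      (L.filter (fun a => decide (rank5 S a = 3)))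
      hndL hL'
      (by
        intro c hc
        rcases List.mem_append.1 hc with hc' | hc' <;>
          · have h2 := of_decide_eq_true (List.mem_filter.1 hc').2
            rcases c with (i | j) | (j | c0)
            · exact ⟨i, rfl⟩
            · simp [rank5] at h2
            · simp [rank5] at h2
            · simp [rank5] at h2)
      (by
        intro i
        by_cases hi : i ∈ S
        · exact List.mem_append.2 (Or.inl (List.mem_filter.2 ⟨hmemL _, by simp [ixp, rank5, hi]⟩))
        · exact List.mem_append.2 (Or.inr (List.mem_filter.2 ⟨hmemL _, by simp [ixp, rank5, hi]⟩)))
      (by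
        intro c hc
        have h2 := of_decide_eq_true (List.mem_filter.1 hc).2
        rcases c with (i | j) | (j | c0)
        · simp only [rank5] at h2; split_ifs at h2 <;> omega
        · exact ⟨j, rfl⟩
        · simp [rank5] at h2
        · simp [rank5] at h2)
      (by
        intro c hc
        have h2 := of_decide_eq_true (List.mem_filter.1 hc).2
        rcases c with (i | j) | (j | c0)
        · simp only [rank5] at h2; split_ifs at h2 <;> omega
        · simp [rank5] at h2
        · exact ⟨j, rfl⟩
        · simp [rank5] at h2)
      (by
        have hmem : (Sum.inr (Sum.inl (⟨0, by omega⟩ : Fin (k+1))) : Proj n k)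
            ∈ L.filter (fun a => decide (rank5 S a = 3)) :=
          List.mem_filter.2 ⟨hmemL _, by simp [rank5]⟩
        exact List.ne_nil_of_mem hmem)
    -- now compute the fold over the x blocks directly
    have hB0nd : (L.filter (fun a => decide (rank5 S a = 0))).Nodup :=
      List.Nodup.sublist (List.filter_sublist (l := L)) hndL
    have hB0len : k ≤ (L.filter (fun a => decide (rank5 S a = 0))).length := by
      have h1 : (S.image (ixp n k)) ⊆ (L.filter (fun a => decide (rank5 S a = 0))).toFinset := by
        intro c hc
        obtain ⟨i, hi, rfl⟩ := Finset.mem_image.1 hc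
        exact List.mem_toFinset.2 (List.mem_filter.2 ⟨hmemL _, by simp [ixp, rank5, hi]⟩)
      have h2 := Finset.card_le_card h1
      rw [Finset.card_image_of_injective _ ixp_inj, hScard,
        List.toFinset_card_of_nodup hB0nd] at h2
      exact h2
    obtain ⟨S1, hfold1, hS1card, hS1sub⟩ := foldX (t := t) hu hk1
      (L.filter (fun a => decide (rank5 S a = 0)))
      (by
        intro c hc
        have h2 := of_decide_eq_true (List.mem_filter.1 hc).2
        rcases c with (i | j) | (j | c0)
        · exact ⟨i, rfl⟩
        · simp [rank5] at h2
        · simp [rank5] at h2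
        · simp [rank5] at h2)
      hB0nd ∅ (by simp) (by simp) (by simpa using hB0len)
    rw [Finset.image_empty] at hfold1
    have hS1 : S1 = S := by
      refine Finset.eq_of_subset_of_card_le ?_ (by omega)
      intro i hi
      rcases hS1sub i hi with h | h
      · exact absurd h (Finset.notMem_empty i)
      · have h2 := of_decide_eq_true (List.mem_filter.1 h).2
        simp only [ixp, rank5] at h2
        by_contra hiS
        rw [if_neg hiS] at h2
        omega
    have hfold2 : ((L.filter (fun a => decide (rank5 S a = 0))
          ++ L.filter (fun a => decide (rank5 S a = 1)))).foldl
        (fun W c => if (∑ x ∈ W, cost0 u t k x) + cost0 u t k c ≤ (k+1) * (3 * ∑ j, u j)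
          then insert c W else W) ∅ = S1.image (ixp n k) := by
      rw [List.foldl_append, hfold1]
      apply foldl_no_change
      intro c hc
      have h2 := of_decide_eq_true (List.mem_filter.1 hc).2
      rcases c with (i | j) | (j | c0)
      · rw [sum_cost_image, hS1card]
        show ¬(k * (3 * ∑ j, u j) + (∑ i ∈ S1, u i) + (3 * (∑ j, u j) + u i)
            ≤ (k + 1) * (3 * ∑ j, u j))
        have h3 := hu i
        have h4 : (k + 1) * (3 * ∑ j, u j) = k * (3 * ∑ j, u j) + 3 * (∑ j, u j) := by ring
        intro hcon
        rw [h4] at hcon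
        omega
      · simp [rank5] at h2
      · simp [rank5] at h2
      · simp [rank5] at h2
    have hSS : S'' = S1 := by
      have himg : S''.image (ixp n k) = S1.image (ixp n k) := by
        rw [← hfoldBx, hfold2]
      ext i
      constructor <;> intro hi
      · have : ixp n k i ∈ S1.image (ixp n k) := himg ▸ Finset.mem_image_of_mem _ hi
        obtain ⟨j, hj, hji⟩ := Finset.mem_image.1 this
        rwa [← ixp_inj hji]
      · have : ixp n k i ∈ S''.image (ixp n k) := himg ▸ Finset.mem_image_of_mem _ hi
        obtain ⟨j, hj, hji⟩ := Finset.mem_image.1 this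
        rwa [← ixp_inj hji]
    have hmem : pProj n k ∈ L.foldl
        (fun W c => if (∑ x ∈ W, cost0 u t k x) + cost0 u t k c ≤ (k+1) * (3 * ∑ j, u j)
          then insert c W else W) ∅ := by
      apply hiff.2
      rw [hSS, hS1]
      exact hSsum
    have hb : (E.flip F).budget = (k + 1) * (3 * ∑ i, u i) := by rw [hE]; rfl
    have hc : (E.flip F).cost = cost0 u t k := by rw [hE]; rfl
    have hrun : PB.greedyAV (E.flip F) (PB.cheaperFirst (cost0 u t k) prec0)
        = L.foldl (fun W c => if (∑ x ∈ W, cost0 u t k x) + cost0 u t k c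
            ≤ (k+1) * (3 * ∑ j, u j) then insert c W else W) ∅ := by
      unfold PB.greedyAV PB.greedyFold
      rw [hb, hc]
    rw [hrun]
    exact hmem
end
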